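/- arXiv:gr-qc/9912019 — 4 statements merged into one kernel-verified Lean document; each statement's English description precedes it below -/
import Mathlib

section
/- For any solution y of y' = -y³ + ε e^{-γτ} with y(0) = y₀ > 0 (ε, γ > 0 constants), there exists a solution Y of the unperturbed equation Y' = -Y³ such that |y(τ) - Y(τ)| = O(e^{-γτ}) as τ → ∞. Explicitly, there is a constant c with y(τ) = 1/(√2 √(τ + c)) + O(e^{-γτ}). -/
open Filter Set MeasureTheory Topology

lemma ypos_aux (ε γ y₀ : ℝ) (hε : 0 < ε)
    (hy₀ : 0 < y₀) (y : ℝ → ℝ) (hy0 : y 0 = y₀)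
    (hode : ∀ τ ∈ Ici (0:ℝ), HasDerivAt y (-(y τ)^3 + ε * Real.exp (-γ * τ)) τ) :
    ∀ t ∈ Ici (0:ℝ), 0 < y t := by
  by_contra h
  push_neg at h
  obtain ⟨t₁, ht₁, hyt₁⟩ := h
  set S : Set ℝ := {t | 0 ≤ t ∧ y t ≤ 0} with hS
  have hne : S.Nonempty := ⟨t₁, ht₁, hyt₁⟩
  have hbdd : BddBelow S := ⟨0, fun s hs => hs.1⟩
  set t₀ := sInf S with ht₀def
  have ht₀0 : 0 ≤ t₀ := le_csInf hne (fun s hs => hs.1)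
  have hpos_lt : ∀ s, 0 ≤ s → s < t₀ → 0 < y s := by
    intro s hs hst
    by_contra hys
    push_neg at hys
    exact absurd (csInf_le hbdd ⟨hs, hys⟩) (not_le.2 hst)
  have hcont : ContinuousAt y t₀ := (hode t₀ ht₀0).continuousAt
  -- y t₀ ≤ 0
  have hyle : y t₀ ≤ 0 := by
    by_contra hyp
    push_neg at hyp
    obtain ⟨δ, hδ, hball⟩ := Metric.continuousAt_iff.1 hcont (y t₀) hyp
    have : t₀ + δ ≤ t₀ := by
      apply le_csInf hne
      intro s hs
      by_contra hlt
      push_neg at hlt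
      have h1 : t₀ ≤ s := csInf_le hbdd hs
      have h2 : |s - t₀| < δ := by rw [abs_sub_lt_iff]; constructor <;> linarith
      have := hball (by simpa [Real.dist_eq] using h2)
      rw [Real.dist_eq, abs_sub_lt_iff] at this
      have : 0 < y s := by linarith
      linarith [hs.2]
    linarith
  have ht₀pos : 0 < t₀ := by
    rcases ht₀0.lt_or_eq with h | h
    · exact h
    · exfalso; rw [← h] at hyle; rw [hy0] at hyle; linarith
  -- y t₀ ≥ 0
  have hyge : 0 ≤ y t₀ := by
    by_contra hyn
    push_neg at hyn
    obtain ⟨δ, hδ, hball⟩ := Metric.continuousAt_iff.1 hcont (-(y t₀)) (by linarith)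
    set s := max (t₀ - δ/2) (t₀/2) with hsdef
    have hs0 : 0 ≤ s := le_max_of_le_right (by linarith)
    have hst : s < t₀ := by
      apply max_lt <;> linarith
    have hdist : |s - t₀| < δ := by
      rw [abs_sub_lt_iff]
      constructor
      · linarith
      · have : t₀ - δ/2 ≤ s := le_max_left _ _
        linarith
    have := hball (by simpa [Real.dist_eq] using hdist)
    rw [Real.dist_eq, abs_sub_lt_iff] at this
    have : y s < 0 := by linarith
    linarith [hpos_lt s hs0 hst]
  have hy0' : y t₀ = 0 := le_antisymm hyle hyge
  -- derivative positive at t₀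
  have hd := hode t₀ ht₀0
  rw [hy0'] at hd
  have hdpos : (0:ℝ) < -(0:ℝ)^3 + ε * Real.exp (-γ * t₀) := by positivity
  have hslope := hasDerivAt_iff_tendsto_slope.1 hd
  have hev : ∀ᶠ s in nhdsWithin t₀ {t₀}ᶜ, 0 < slope y t₀ s :=
    hslope (eventually_gt_nhds hdpos)
  have hmem : Ioo 0 t₀ ∈ nhdsWithin t₀ (Iio t₀) :=
    mem_nhdsWithin.2 ⟨Ioi 0, isOpen_Ioi, ht₀pos, fun x hx => ⟨hx.1, hx.2⟩⟩
  have hle : nhdsWithin t₀ (Iio t₀) ≤ nhdsWithin t₀ {t₀}ᶜ :=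
    nhdsWithin_mono _ (fun x hx => ne_of_lt hx)
  have hev' : ∀ᶠ s in nhdsWithin t₀ (Iio t₀), 0 < slope y t₀ s ∧ s ∈ Ioo 0 t₀ :=
    Filter.Eventually.and (Filter.Eventually.filter_mono hle hev)
      (Filter.eventually_iff_exists_mem.2 ⟨Ioo 0 t₀, hmem, fun x hx => hx⟩)
  have : (nhdsWithin t₀ (Iio t₀)).NeBot := nhdsLT_neBot t₀
  obtain ⟨s, hs1, hs2⟩ := hev'.exists
  have hslope_pos : 0 < (y s - y t₀) / (s - t₀) := by
    rw [slope_def_field] at hs1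
    simpa [div_eq_iff, sub_ne_zero] using hs1
  rw [hy0', sub_zero] at hslope_pos
  have hsneg : s - t₀ < 0 := by linarith [hs2.2]
  have : y s < 0 := by
    by_contra hge
    push_neg at hge
    have := div_nonpos_of_nonneg_of_nonpos hge hsneg.le
    linarith
  linarith [hpos_lt s hs2.1.le hs2.2]


lemma sqrt_le_add_one (x : ℝ) (hx : 0 ≤ x) : Real.sqrt x ≤ x + 1 := by
  nlinarith [Real.sq_sqrt hx, Real.sqrt_nonneg x]

lemma poly_exp_tendsto (c₂ c₁ c₀ b : ℝ) (hb : 0 < b) :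
    Tendsto (fun s => (c₂*s^2 + c₁*s + c₀) * Real.exp (-b*s)) atTop (𝓝 0) := by
  have key : ∀ n : ℕ, Tendsto (fun s : ℝ => s^n * Real.exp (-b*s)) atTop (𝓝 0) := by
    intro n
    have := tendsto_rpow_mul_exp_neg_mul_atTop_nhds_zero (n:ℝ) b hb
    apply this.congr'
    filter_upwards [eventually_gt_atTop 0] with s hs
    rw [Real.rpow_natCast]
  have h2 := (key 2).const_mul c₂
  have h1 := (key 1).const_mul c₁
  have h0 := (key 0).const_mul c₀
  simp only [mul_zero] at h2 h1 h0
  have := (h2.add h1).add h0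
  simp only [add_zero] at this
  apply this.congr
  intro s; ring

section Mstuff
variable (ε γ a : ℝ)

noncomputable def Mfun (s : ℝ) : ℝ :=
  (2*ε/γ)*(2*s+a)*Real.sqrt (2*s+a) + (6*ε/γ^2)*Real.sqrt (2*s+a) + 6*ε/(γ^3*Real.sqrt a)

noncomputable def Mfun' (s : ℝ) : ℝ :=
  (6*ε/γ)*Real.sqrt (2*s+a) + (6*ε/γ^2)/Real.sqrt (2*s+a)

noncomputable def Ffun' (s : ℝ) : ℝ := (γ * Mfun ε γ a s - Mfun' ε γ a s) * Real.exp (-γ*s)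

variable (hε : 0 < ε) (hγ : 0 < γ) (ha : 0 < a)
include hε hγ ha

lemma Mfun_deriv : ∀ s ∈ Ici (0:ℝ), HasDerivAt (Mfun ε γ a) (Mfun' ε γ a s) s := by
  intro s hs
  have hsa : (0:ℝ) < 2*s+a := by simp at hs; linarith
  have hlin : HasDerivAt (fun u : ℝ => 2*u+a) 2 s := by
    simpa using ((hasDerivAt_id s).const_mul 2).add_const a
  have hsq : HasDerivAt (fun u => Real.sqrt (2*u+a)) (1/(2*Real.sqrt (2*s+a)) * 2) s :=
    (Real.hasDerivAt_sqrt (ne_of_gt hsa)).comp s hlin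
  have hall := (((hlin.const_mul (2*ε/γ)).fun_mul hsq).fun_add (hsq.const_mul (6*ε/γ^2))).add_const
    (6*ε/(γ^3*Real.sqrt a))
  refine hall.congr_deriv ?_; symm
  have hq0 : (0:ℝ) < Real.sqrt (2*s+a) := Real.sqrt_pos.2 hsa
  set q := Real.sqrt (2*s+a) with hqdef
  have hq : q*q = 2*s+a := Real.mul_self_sqrt hsa.le
  unfold Mfun'
  rw [← hqdef, ← hq]
  field_simp
  ring

lemma Mfun_key : ∀ s ∈ Ici (0:ℝ),
    2*ε*((2*s+a)*Real.sqrt (2*s+a)) ≤ γ * Mfun ε γ a s - Mfun' ε γ a s := by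
  intro s hs
  simp only [mem_Ici] at hs
  have hsa : (0:ℝ) < 2*s+a := by linarith
  have h1 : Real.sqrt a ≤ Real.sqrt (2*s+a) := Real.sqrt_le_sqrt (by linarith)
  have h2 : (0:ℝ) < Real.sqrt a := Real.sqrt_pos.2 ha
  have h3 : (0:ℝ) < Real.sqrt (2*s+a) := Real.sqrt_pos.2 hsa
  unfold Mfun Mfun'
  have key : (6*ε/γ^2)/Real.sqrt (2*s+a) ≤ (6*ε/γ^2)/Real.sqrt a := by
    apply div_le_div_of_nonneg_left _ h2 h1
    positivity
  have e1 : γ * ((2*ε/γ)*(2*s+a)*Real.sqrt (2*s+a)) = 2*ε*((2*s+a)*Real.sqrt (2*s+a)) := by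
    field_simp
  have e2 : γ * ((6*ε/γ^2)*Real.sqrt (2*s+a)) = (6*ε/γ)*Real.sqrt (2*s+a) := by
    field_simp
  have e3 : γ * (6*ε/(γ^3*Real.sqrt a)) = (6*ε/γ^2)/Real.sqrt a := by
    field_simp
  nlinarith [key]

lemma Mfun_nonneg : ∀ s ∈ Ici (0:ℝ), 0 ≤ Mfun ε γ a s := by
  intro s hs
  simp only [mem_Ici] at hs
  have hsa : (0:ℝ) ≤ 2*s+a := by linarith
  unfold Mfun
  have := Real.sqrt_nonneg (2*s+a)
  have := Real.sqrt_pos.2 ha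
  positivity

lemma Mfun'_nonneg : ∀ s ∈ Ici (0:ℝ), 0 ≤ Mfun' ε γ a s := by
  intro s hs
  simp only [mem_Ici] at hs
  unfold Mfun'
  have := Real.sqrt_nonneg (2*s+a)
  positivity

lemma Mfun_poly : ∀ s ∈ Ici (0:ℝ), Mfun ε γ a s ≤
    (2*ε/γ*4 + 6*ε/γ^2*0 + 0)*s^2
    + (2*ε/γ*(4*a+2) + 6*ε/γ^2*2)*s
    + (2*ε/γ*(a^2+a) + 6*ε/γ^2*(a+1) + 6*ε/(γ^3*Real.sqrt a)) := by
  intro s hs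
  simp only [mem_Ici] at hs
  have hsa : (0:ℝ) ≤ 2*s+a := by linarith
  have h1 : Real.sqrt (2*s+a) ≤ 2*s+a+1 := sqrt_le_add_one _ hsa
  have h0 : 0 ≤ Real.sqrt (2*s+a) := Real.sqrt_nonneg _
  unfold Mfun
  have hA : 0 ≤ 2*ε/γ := by positivity
  have hB : 0 ≤ 6*ε/γ^2 := by positivity
  nlinarith [mul_le_mul_of_nonneg_left h1 hA, mul_le_mul_of_nonneg_left h1 hB,
    mul_nonneg hA hsa, mul_nonneg (mul_nonneg hA hsa) h0]

noncomputable def Ffun (s : ℝ) : ℝ := -(Mfun ε γ a s * Real.exp (-γ*s))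

lemma Ffun_deriv : ∀ s ∈ Ici (0:ℝ), HasDerivAt (Ffun ε γ a) (Ffun' ε γ a s) s := by
  intro s hs
  have hM := Mfun_deriv ε γ a hε hγ ha s hs
  have hexp : HasDerivAt (fun u : ℝ => Real.exp (-γ*u)) (-γ * Real.exp (-γ*s)) s := by
    have h1 : HasDerivAt (fun u : ℝ => -γ*u) (-γ) s := by
      simpa using (hasDerivAt_id s).const_mul (-γ)
    simpa [mul_comm] using h1.exp
  have := (hM.fun_mul hexp).fun_neg
  refine this.congr_deriv ?_; symm
  unfold Ffun'
  ring

lemma Ffun_tendsto : Tendsto (Ffun ε γ a) atTop (𝓝 0) := by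
  have hpoly := poly_exp_tendsto (2*ε/γ*4 + 6*ε/γ^2*0 + 0)
    (2*ε/γ*(4*a+2) + 6*ε/γ^2*2)
    (2*ε/γ*(a^2+a) + 6*ε/γ^2*(a+1) + 6*ε/(γ^3*Real.sqrt a)) γ hγ
  have hsq : Tendsto (fun s => Mfun ε γ a s * Real.exp (-γ*s)) atTop (𝓝 0) := by
    apply squeeze_zero' (t₀ := atTop)
    · filter_upwards [eventually_ge_atTop (0:ℝ)] with s hs
      exact mul_nonneg (Mfun_nonneg ε γ a hε hγ ha s hs) (Real.exp_pos _).le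
    · filter_upwards [eventually_ge_atTop (0:ℝ)] with s hs
      exact mul_le_mul_of_nonneg_right (Mfun_poly ε γ a hε hγ ha s hs) (Real.exp_pos _).le
    · exact hpoly
  unfold Ffun
  simpa [neg_mul] using hsq.neg

lemma Ffun'_nonneg : ∀ s ∈ Ici (0:ℝ), 0 ≤ Ffun' ε γ a s := by
  intro s hs
  have h1 := Mfun_key ε γ a hε hγ ha s hs
  have h2 : 0 ≤ (2*s+a)*Real.sqrt (2*s+a) := by
    have : (0:ℝ) ≤ 2*s+a := by simp at hs; linarith
    positivity
  unfold Ffun'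
  have : 0 ≤ γ * Mfun ε γ a s - Mfun' ε γ a s := by nlinarith
  positivity

lemma Ffun'_cont : ContinuousOn (Ffun' ε γ a) (Ici 0) := by
  intro s hs
  simp only [mem_Ici] at hs
  have hsa : (0:ℝ) < 2*s+a := by linarith
  have hsq : ContinuousAt (fun u : ℝ => Real.sqrt (2*u+a)) s :=
    Real.continuous_sqrt.continuousAt.comp (by fun_prop)
  have hsqne : Real.sqrt (2*s+a) ≠ 0 := by positivity
  have : ContinuousAt (Ffun' ε γ a) s := by
    unfold Ffun' Mfun Mfun'
    exact (((((continuousAt_const.mul (by fun_prop)).mul hsq).add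
      (continuousAt_const.mul hsq)).add continuousAt_const).const_mul γ |>.sub
      ((continuousAt_const.mul hsq).add (continuousAt_const.div hsq hsqne))).mul
      ((Real.continuous_exp.comp (by continuity)).continuousAt)
  exact this.continuousWithinAt

lemma Ffun'_bigO : (Ffun' ε γ a) =O[atTop] fun s => Real.exp (-(γ/2)*s) := by
  rw [Asymptotics.isBigO_iff]
  refine ⟨1, ?_⟩
  have hpoly := poly_exp_tendsto (γ*(2*ε/γ*4 + 6*ε/γ^2*0 + 0))
    (γ*(2*ε/γ*(4*a+2) + 6*ε/γ^2*2))
    (γ*(2*ε/γ*(a^2+a) + 6*ε/γ^2*(a+1) + 6*ε/(γ^3*Real.sqrt a))) (γ/2) (by linarith)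
  have hev := hpoly.eventually (eventually_le_nhds (show (0:ℝ) < 1 by norm_num))
  filter_upwards [eventually_ge_atTop (0:ℝ), hev] with s hs hsmall
  have h1 : 0 ≤ Ffun' ε γ a s := Ffun'_nonneg ε γ a hε hγ ha s hs
  have h2 : Ffun' ε γ a s ≤ (γ*(2*ε/γ*4 + 6*ε/γ^2*0 + 0)*s^2
      + γ*(2*ε/γ*(4*a+2) + 6*ε/γ^2*2)*s
      + γ*(2*ε/γ*(a^2+a) + 6*ε/γ^2*(a+1) + 6*ε/(γ^3*Real.sqrt a))) * Real.exp (-γ*s) := by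
    unfold Ffun'
    apply mul_le_mul_of_nonneg_right _ (Real.exp_pos _).le
    have hMp := Mfun_poly ε γ a hε hγ ha s hs
    have hM'n := Mfun'_nonneg ε γ a hε hγ ha s hs
    nlinarith [mul_le_mul_of_nonneg_left hMp hγ.le]
  rw [Real.norm_eq_abs, Real.norm_eq_abs, abs_of_nonneg h1, abs_of_nonneg (Real.exp_pos _).le,
    one_mul]
  have hexp : Real.exp (-γ*s) = Real.exp (-(γ/2)*s) * Real.exp (-(γ/2)*s) := by
    rw [← Real.exp_add]; ring_nf
  refine h2.trans ?_
  rw [hexp, ← mul_assoc]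
  exact (mul_le_mul_of_nonneg_right hsmall (Real.exp_pos _).le).trans_eq (one_mul _)

lemma Ffun'_int : ∀ t ∈ Ici (0:ℝ), IntegrableOn (Ffun' ε γ a) (Ioi t) := by
  intro t ht
  apply integrable_of_isBigO_exp_neg (a := t) (half_pos hγ)
    ((Ffun'_cont ε γ a hε hγ ha).mono (Ici_subset_Ici.2 ht.out))
  exact Ffun'_bigO ε γ a hε hγ ha

lemma Ffun'_integral : ∀ t ∈ Ici (0:ℝ),
    ∫ s in Ioi t, Ffun' ε γ a s = Mfun ε γ a t * Real.exp (-γ*t) := by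
  intro t ht
  have := integral_Ioi_of_hasDerivAt_of_tendsto' (f := Ffun ε γ a) (f' := Ffun' ε γ a) (a := t)
    (m := 0)
    (fun x hx => Ffun_deriv ε γ a hε hγ ha x (le_trans ht.out hx.out))
    (Ffun'_int ε γ a hε hγ ha t ht) (Ffun_tendsto ε γ a hε hγ ha)
  rw [this]
  unfold Ffun
  ring

end Mstuff


lemma Yderiv (c : ℝ) : ∀ τ > -c, HasDerivAt (fun τ => 1 / (Real.sqrt 2 * Real.sqrt (τ + c)))
    (-(1 / (Real.sqrt 2 * Real.sqrt (τ + c)))^3) τ := by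
  intro τ hτ
  have hpos : 0 < τ + c := by linarith
  have hs : 0 < Real.sqrt (τ + c) := Real.sqrt_pos.2 hpos
  have h2 : (0:ℝ) < Real.sqrt 2 := by positivity
  have hlin : HasDerivAt (fun u : ℝ => u + c) 1 τ := (hasDerivAt_id τ).add_const c
  have hsq : HasDerivAt (fun u => Real.sqrt (u + c)) (1/(2*Real.sqrt (τ + c)) * 1) τ :=
    (Real.hasDerivAt_sqrt (ne_of_gt hpos)).comp τ hlin
  have hmul : HasDerivAt (fun u => Real.sqrt 2 * Real.sqrt (u + c))
      (Real.sqrt 2 * (1/(2*Real.sqrt (τ + c)) * 1)) τ := hsq.const_mul _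
  have hne : Real.sqrt 2 * Real.sqrt (τ + c) ≠ 0 := by positivity
  have hinv := hmul.fun_inv hne
  have : HasDerivAt (fun u => 1 / (Real.sqrt 2 * Real.sqrt (u + c)))
      (-(Real.sqrt 2 * (1/(2*Real.sqrt (τ + c)) * 1)) / (Real.sqrt 2 * Real.sqrt (τ + c))^2) τ := by
    simpa [one_div] using hinv
  convert this using 1
  have hp2 : Real.sqrt 2 ^ 2 = 2 := Real.sq_sqrt (by norm_num)
  field_simp
  linear_combination hp2

lemma inv_sub_inv_le (p q : ℝ) (hq1 : 1 ≤ q) (hpq : q ≤ p) :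
    -(p⁻¹ - q⁻¹) ≤ (p^2 - q^2)/(q^2*q) := by
  have hqpos : 0 < q := lt_of_lt_of_le one_pos hq1
  have hppos : 0 < p := lt_of_lt_of_le hqpos hpq
  have e1 : -(p⁻¹ - q⁻¹) = (p - q)/(p*q) := by field_simp; ring
  rw [e1, div_le_div_iff₀ (by positivity) (by positivity)]
  have h1 : 0 ≤ p - q := sub_nonneg.2 hpq
  have hA : 0 ≤ (p - q) * q * p^2 := mul_nonneg (mul_nonneg h1 hqpos.le) (sq_nonneg p)
  have hB : 0 ≤ ((p - q) * q)^2 := sq_nonneg _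
  nlinarith [hA, hB]

lemma M_le_helper (ε γ D w q x sa s2 : ℝ) (hε : 0 < ε) (hγ : 0 < γ) (hD : 0 ≤ D)
    (hw2 : 2 ≤ w) (hq1 : 1 ≤ q) (hx0 : 0 ≤ x) (hxw : x ≤ 2*w) (hsa0 : 0 ≤ sa)
    (hs2 : 1 ≤ s2) (hsaq : sa ≤ s2 * q) :
    (2*ε/γ)*x*sa + (6*ε/γ^2)*sa + D ≤ (4*s2*ε/γ + 6*s2*ε/γ^2 + D) * (w*q) := by
  have hqpos : (0:ℝ) < q := by linarith
  have hwpos : (0:ℝ) < w := by linarith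
  have t1 : (2*ε/γ)*x*sa ≤ (2*ε/γ)*(2*w)*(s2*q) :=
    mul_le_mul (mul_le_mul_of_nonneg_left hxw (by positivity)) hsaq hsa0 (by positivity)
  have t2 : (6*ε/γ^2)*sa ≤ (6*ε/γ^2)*(s2*q) := mul_le_mul_of_nonneg_left hsaq (by positivity)
  have t2' : (6*ε/γ^2)*(s2*q) ≤ (6*s2*ε/γ^2)*(w*q) := by
    have h1 : (1:ℝ)*q ≤ w*q := by nlinarith
    calc (6*ε/γ^2)*(s2*q) = (6*s2*ε/γ^2)*(1*q) := by ring
      _ ≤ (6*s2*ε/γ^2)*(w*q) := mul_le_mul_of_nonneg_left h1 (by positivity)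
  have t3 : D ≤ D*(w*q) := by
    nth_rewrite 1 [← mul_one D]
    apply mul_le_mul_of_nonneg_left _ hD
    nlinarith
  have main : 2*ε/γ*x*sa + 6*ε/γ^2*sa + D ≤
      2*ε/γ*(2*w)*(s2*q) + 6*s2*ε/γ^2*(w*q) + D*(w*q) := by
    linarith [t1, t2.trans t2', t3]
  refine main.trans (le_of_eq ?_)
  ring

/-- Any solution of the perturbed equation `y' = -y³ + ε e^{-γτ}` with `y(0) = y₀ > 0`
is approximated, up to an `O(e^{-γτ})` error, by a solution `Y(τ) = 1/(√2 √(τ+c))`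
of the unperturbed equation `Y' = -Y³`. -/
theorem perturbed_cubic_asymptotic (ε γ y₀ : ℝ) (hε : 0 < ε) (hγ : 0 < γ)
    (hy₀ : 0 < y₀) (y : ℝ → ℝ) (hy0 : y 0 = y₀)
    (hode : ∀ τ ∈ Ici (0:ℝ), HasDerivAt y (-(y τ)^3 + ε * Real.exp (-γ * τ)) τ) :
    ∃ (c : ℝ) (Y : ℝ → ℝ),
      (∀ τ, Y τ = 1 / (Real.sqrt 2 * Real.sqrt (τ + c))) ∧
      (∀ τ > -c, HasDerivAt Y (-(Y τ)^3) τ) ∧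
      (fun τ => y τ - Y τ) =O[atTop] (fun τ => Real.exp (-γ * τ)) := by
  have hpos := ypos_aux ε γ y₀ hε hy₀ y hy0 hode
  set z : ℝ → ℝ := fun t => ((y t)^2)⁻¹ with hzdef
  set g : ℝ → ℝ := fun t => 2*ε*Real.exp (-γ*t) * ((y t)^3)⁻¹ with hgdef
  have hzderiv : ∀ t ∈ Ici (0:ℝ), HasDerivAt z (2 - g t) t := by
    intro t ht
    have hy := hpos t ht
    have h1 : HasDerivAt (fun s => (y s)^2) (2 * y t * (-(y t)^3 + ε * Real.exp (-γ*t))) t := by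
      simpa [mul_comm] using ((hode t ht).fun_pow 2)
    have h2 := h1.inv (by positivity)
    refine h2.congr_deriv ?_; symm
    have : y t ≠ 0 := ne_of_gt hy
    simp only [hgdef]
    field_simp
    ring
  have hganneg : ∀ t ∈ Ici (0:ℝ), 0 ≤ g t := by
    intro t ht
    have := hpos t ht
    positivity
  have hzcont : ContinuousOn z (Ici 0) :=
    fun t ht => ((hzderiv t ht).continuousAt).continuousWithinAt
  have hzle : ∀ t ∈ Ici (0:ℝ), z t ≤ 2*t + z 0 := by
    intro t ht
    have hanti : AntitoneOn (fun s => z s - 2*s) (Ici 0) := by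
      apply antitoneOn_of_deriv_nonpos (convex_Ici 0)
      · exact (hzcont.sub (continuousOn_const.mul continuousOn_id)).congr (fun x _ => rfl)
      · intro x hx
        rw [interior_Ici] at hx
        have hd : HasDerivAt (fun s => z s - 2*s) (2 - g x - 2) x := by
          simpa using (hzderiv x (le_of_lt hx.out)).fun_sub ((hasDerivAt_id x).const_mul 2)
        exact hd.differentiableAt.differentiableWithinAt
      · intro x hx
        rw [interior_Ici] at hx
        have hd : HasDerivAt (fun s => z s - 2*s) (2 - g x - 2) x := by
          simpa using (hzderiv x (le_of_lt hx.out)).fun_sub ((hasDerivAt_id x).const_mul 2)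
        rw [hd.deriv]
        have := hganneg x (le_of_lt hx.out)
        linarith
    have := hanti (self_mem_Ici) ht ht
    simp only [mul_zero, sub_zero] at this
    linarith
  set a : ℝ := z 0 with hadef
  have ha : 0 < a := by
    have := hpos 0 self_mem_Ici
    simp only [hadef, hzdef]
    positivity
  have hzpos : ∀ t ∈ Ici (0:ℝ), 0 < z t := by
    intro t ht
    have := hpos t ht
    simp only [hzdef]
    positivity
  have hsqrtz : ∀ t ∈ Ici (0:ℝ), Real.sqrt (z t) = (y t)⁻¹ := by
    intro t ht
    have hy := hpos t ht
    simp only [hzdef]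
    rw [Real.sqrt_inv, Real.sqrt_sq hy.le]
  -- g ≤ Ffun'
  have hgle : ∀ s ∈ Ici (0:ℝ), g s ≤ Ffun' ε γ a s := by
    intro s hs
    have hy := hpos s hs
    have hzs := hzpos s hs
    have hcube : ((y s)^3)⁻¹ = z s * Real.sqrt (z s) := by
      rw [hsqrtz s hs]
      have : y s ≠ 0 := ne_of_gt hy
      simp only [hzdef]
      field_simp
    have hsa : (0:ℝ) ≤ 2*s+a := by
      have : (0:ℝ) ≤ s := hs
      linarith
    have hmono : z s * Real.sqrt (z s) ≤ (2*s+a) * Real.sqrt (2*s+a) := by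
      apply mul_le_mul (hzle s hs) (Real.sqrt_le_sqrt (hzle s hs)) (Real.sqrt_nonneg _) hsa
    have hstep : g s ≤ 2*ε*((2*s+a)*Real.sqrt (2*s+a)) * Real.exp (-γ*s) := by
      simp only [hgdef]
      rw [hcube]
      calc 2*ε*Real.exp (-γ*s) * (z s * Real.sqrt (z s))
          ≤ 2*ε*Real.exp (-γ*s) * ((2*s+a)*Real.sqrt (2*s+a)) := by
            apply mul_le_mul_of_nonneg_left hmono (by positivity)
        _ = 2*ε*((2*s+a)*Real.sqrt (2*s+a)) * Real.exp (-γ*s) := by ring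
    refine hstep.trans ?_
    unfold Ffun'
    exact mul_le_mul_of_nonneg_right (Mfun_key ε γ a hε hγ ha s hs) (Real.exp_pos _).le
  have hgcont : ContinuousOn g (Ici 0) := by
    intro t ht
    have hy := hpos t ht
    have hyc : ContinuousAt y t := (hode t ht).continuousAt
    have : ContinuousAt g t := by
      simp only [hgdef]
      exact (continuousAt_const.mul
        ((Real.continuous_exp.comp (by continuity)).continuousAt)).mul
        (((hyc.pow 3).inv₀ (pow_pos hy 3).ne'))
    exact this.continuousWithinAt
  have hgint : ∀ t ∈ Ici (0:ℝ), MeasureTheory.IntegrableOn g (Ioi t) := by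
    intro t ht
    apply ((Ffun'_int ε γ a hε hγ ha t ht).mono' ((hgcont.mono ?_).aestronglyMeasurable
      measurableSet_Ioi))
    · rw [MeasureTheory.ae_restrict_iff' measurableSet_Ioi]
      filter_upwards with s hs
      have hs0 : s ∈ Ici (0:ℝ) := le_trans ht.out (le_of_lt hs)
      rw [Real.norm_eq_abs, abs_of_nonneg (hganneg s hs0)]
      exact hgle s hs0
    · exact fun s hs => le_trans ht.out (le_of_lt hs)
  set r : ℝ → ℝ := fun t => ∫ s in Ioi t, g s with hrdef
  set R : ℝ := r 0 with hRdef
  set c : ℝ := (a - R)/2 with hcdef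
  -- FTC and splitting
  have hz_eq : ∀ t ∈ Ici (0:ℝ), z t = 2*(t + c) + r t := by
    intro t ht
    have ht' : (0:ℝ) ≤ t := ht
    have hcontg : ContinuousOn (fun s => 2 - g s) (uIcc 0 t) := by
      apply ContinuousOn.sub continuousOn_const
      apply hgcont.mono
      rw [uIcc_of_le ht']
      exact fun x hx => hx.1
    have hftc : ∫ s in (0:ℝ)..t, (2 - g s) = z t - z 0 := by
      apply intervalIntegral.integral_eq_sub_of_hasDerivAt
      · intro x hx
        rw [uIcc_of_le ht'] at hx
        exact hzderiv x hx.1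
      · exact hcontg.intervalIntegrable
    have hgii : IntervalIntegrable g MeasureTheory.volume 0 t := by
      apply ContinuousOn.intervalIntegrable
      apply hgcont.mono
      rw [uIcc_of_le ht']
      exact fun x hx => hx.1
    have hsub : ∫ s in (0:ℝ)..t, (2 - g s) =
        (∫ s in (0:ℝ)..t, (2:ℝ)) - ∫ s in (0:ℝ)..t, g s :=
      intervalIntegral.integral_sub intervalIntegrable_const hgii
    have hconst : ∫ s in (0:ℝ)..t, (2:ℝ) = 2*t := by
      simp [intervalIntegral.integral_const]
      ring
    have hsplit : R = (∫ s in (0:ℝ)..t, g s) + r t := by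
      rw [intervalIntegral.integral_of_le ht']
      simp only [hRdef, hrdef]
      rw [← MeasureTheory.setIntegral_union (Ioc_disjoint_Ioi le_rfl) measurableSet_Ioi
        (((hgint 0 self_mem_Ici)).mono_set Ioc_subset_Ioi_self) (hgint t ht)]
      rw [Ioc_union_Ioi_eq_Ioi ht']
    have : z t - z 0 = 2*t - (R - r t) := by
      rw [← hftc, hsub, hconst]
      linarith [hsplit]
    simp only [hcdef, ← hadef]
    linarith
  have hr_nonneg : ∀ t ∈ Ici (0:ℝ), 0 ≤ r t := by
    intro t ht
    apply MeasureTheory.setIntegral_nonneg measurableSet_Ioi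
    intro s hs
    exact hganneg s (le_trans ht.out (le_of_lt hs))
  have hr_le : ∀ t ∈ Ici (0:ℝ), r t ≤ Mfun ε γ a t * Real.exp (-γ*t) := by
    intro t ht
    rw [← Ffun'_integral ε γ a hε hγ ha t ht]
    apply MeasureTheory.setIntegral_mono_on (hgint t ht) (Ffun'_int ε γ a hε hγ ha t ht)
      measurableSet_Ioi
    intro s hs
    exact hgle s (le_trans ht.out (le_of_lt hs))
  -- conclude
  refine ⟨c, fun τ => 1 / (Real.sqrt 2 * Real.sqrt (τ + c)), fun τ => rfl, Yderiv c, ?_⟩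
  rw [Asymptotics.isBigO_iff]
  set D : ℝ := 6*ε/(γ^3*Real.sqrt a) with hDdef
  refine ⟨4*Real.sqrt 2*ε/γ + 6*Real.sqrt 2*ε/γ^2 + D, ?_⟩
  have hD : 0 < D := by
    have : (0:ℝ) < Real.sqrt a := Real.sqrt_pos.2 ha
    positivity
  filter_upwards [eventually_ge_atTop (0:ℝ), eventually_ge_atTop (1 - c),
    eventually_ge_atTop ((a - 4*c)/2)] with τ hτ0 hτ1 hτ2
  have hτc : 1 ≤ τ + c := by linarith
  set w : ℝ := 2*(τ+c) with hwdef
  have hw2 : 2 ≤ w := by simp only [hwdef]; linarith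
  have hwpos : 0 < w := by linarith
  have hτI : τ ∈ Ici (0:ℝ) := hτ0
  have hzw : z τ = w + r τ := by rw [hz_eq τ hτI]
  have hwz : w ≤ z τ := by
    rw [hzw]; linarith [hr_nonneg τ hτI]
  have hzp : 0 < z τ := hzpos τ hτI
  set p : ℝ := Real.sqrt (z τ) with hpdef
  set q : ℝ := Real.sqrt w with hqdef
  have hq1 : 1 ≤ q := by
    rw [hqdef]
    rw [show (1:ℝ) = Real.sqrt 1 by simp]
    exact Real.sqrt_le_sqrt (by linarith)
  have hqpos : 0 < q := lt_of_lt_of_le one_pos hq1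
  have hpq : q ≤ p := Real.sqrt_le_sqrt hwz
  have hppos : 0 < p := lt_of_lt_of_le hqpos hpq
  have hp2 : p^2 = z τ := Real.sq_sqrt hzp.le
  have hq2 : q^2 = w := Real.sq_sqrt hwpos.le
  have hY : (1:ℝ) / (Real.sqrt 2 * Real.sqrt (τ + c)) = q⁻¹ := by
    rw [hqdef, hwdef, Real.sqrt_mul (by norm_num : (0:ℝ) ≤ 2), one_div]
  have hyτ : y τ = p⁻¹ := by
    rw [hpdef, hsqrtz τ hτI, inv_inv]
  have hrτ : r τ = p^2 - q^2 := by rw [hp2, hq2]; linarith [hzw]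
  clear_value p q w D
  -- |y - Y| ≤ r/(w*√w)
  have hkey1 : |y τ - 1 / (Real.sqrt 2 * Real.sqrt (τ + c))| ≤ r τ / (w * q) := by
    rw [hY, hyτ]
    have hle : p⁻¹ ≤ q⁻¹ := inv_anti₀ hqpos hpq
    rw [abs_of_nonpos (by linarith)]
    have := inv_sub_inv_le p q hq1 hpq
    rw [hrτ, ← hq2]
    exact this
  -- M/(w*q) ≤ C
  have hsa2 : 2*τ + a ≤ 2*w := by simp only [hwdef]; linarith
  have hsa0 : (0:ℝ) ≤ 2*τ + a := by linarith
  have hsq2q : Real.sqrt (2*τ+a) ≤ Real.sqrt 2 * q := by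
    rw [hqdef, ← Real.sqrt_mul (by norm_num : (0:ℝ) ≤ 2)]
    exact Real.sqrt_le_sqrt hsa2
  have hsqnn : (0:ℝ) ≤ Real.sqrt (2*τ+a) := Real.sqrt_nonneg _
  have hs2 : (1:ℝ) ≤ Real.sqrt 2 := by
    rw [show (1:ℝ) = Real.sqrt 1 by simp]
    exact Real.sqrt_le_sqrt (by norm_num)
  have hMle : Mfun ε γ a τ ≤ (4*Real.sqrt 2*ε/γ + 6*Real.sqrt 2*ε/γ^2 + D) * (w*q) := by
    unfold Mfun
    rw [← hDdef]
    exact M_le_helper ε γ D w q (2*τ+a) (Real.sqrt (2*τ+a)) (Real.sqrt 2)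
      hε hγ hD.le hw2 hq1 hsa0 hsa2 hsqnn hs2 hsq2q
  have hfinal : r τ / (w * q) ≤ (4*Real.sqrt 2*ε/γ + 6*Real.sqrt 2*ε/γ^2 + D) *
      Real.exp (-γ*τ) := by
    rw [div_le_iff₀ (by positivity)]
    calc r τ ≤ Mfun ε γ a τ * Real.exp (-γ*τ) := hr_le τ hτI
      _ ≤ ((4*Real.sqrt 2*ε/γ + 6*Real.sqrt 2*ε/γ^2 + D) * (w*q)) * Real.exp (-γ*τ) :=
          mul_le_mul_of_nonneg_right hMle (Real.exp_pos _).le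
      _ = (4*Real.sqrt 2*ε/γ + 6*Real.sqrt 2*ε/γ^2 + D) * Real.exp (-γ*τ) * (w*q) := by ring
  rw [Real.norm_eq_abs, Real.norm_eq_abs, abs_of_nonneg (Real.exp_pos _).le]
  exact hkey1.trans hfinal
end

section
/- Every solution of the scalar ODE R' = -R³ - R⁵ + O(R⁷) with small positive initial data satisfies R(τ) = (1/√(2τ))·[1 - (1/(4τ))(ln τ + C) + o(τ^{-1})] as τ → ∞, for some constant C depending on the initial condition. -/
open Filter Set Topology


/-- Monotonicity on `Ici a` from a derivative bound. -/
lemma CMF_mono {F F' : ℝ → ℝ} {a : ℝ} (hF : ∀ τ ∈ Ici a, HasDerivAt F (F' τ) τ)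
    (h' : ∀ τ ∈ Ici a, 0 ≤ F' τ) : MonotoneOn F (Ici a) := by
  apply monotoneOn_of_deriv_nonneg (convex_Ici a)
  · exact fun τ hτ => ((hF τ hτ).continuousAt).continuousWithinAt
  · rw [interior_Ici]
    exact fun τ hτ => ((hF τ (Ioi_subset_Ici_self hτ)).differentiableAt).differentiableWithinAt
  · rw [interior_Ici]
    intro τ hτ
    rw [(hF τ (Ioi_subset_Ici_self hτ)).deriv]
    exact h' τ (Ioi_subset_Ici_self hτ)

lemma CMF_anti {F F' : ℝ → ℝ} {a : ℝ} (hF : ∀ τ ∈ Ici a, HasDerivAt F (F' τ) τ)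
    (h' : ∀ τ ∈ Ici a, F' τ ≤ 0) : AntitoneOn F (Ici a) := by
  apply antitoneOn_of_deriv_nonpos (convex_Ici a)
  · exact fun τ hτ => ((hF τ hτ).continuousAt).continuousWithinAt
  · rw [interior_Ici]
    exact fun τ hτ => ((hF τ (Ioi_subset_Ici_self hτ)).differentiableAt).differentiableWithinAt
  · rw [interior_Ici]
    intro τ hτ
    rw [(hF τ (Ioi_subset_Ici_self hτ)).deriv]
    exact h' τ (Ioi_subset_Ici_self hτ)

/-- Elementary estimate: `0 ≤ 1/√(1+x) - 1 + x/2 ≤ x²` for `x ≥ 0`. -/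
lemma CMF_sqrt_est {x : ℝ} (hx : 0 ≤ x) :
    0 ≤ 1 / Real.sqrt (1 + x) - 1 + x / 2 ∧ 1 / Real.sqrt (1 + x) - 1 + x / 2 ≤ x ^ 2 := by
  set s := Real.sqrt (1 + x) with hs
  have hs1 : 1 ≤ s := by
    have := Real.sqrt_le_sqrt (show (1:ℝ) ≤ 1 + x by linarith)
    rwa [Real.sqrt_one] at this
  have hs0 : 0 < s := by linarith
  have hsq : s ^ 2 = 1 + x := Real.sq_sqrt (by linarith)
  have hxs : x = s ^ 2 - 1 := by linarith
  have key : 1 / s - 1 + x / 2 = (s - 1) ^ 2 * (s + 2) / (2 * s) := by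
    rw [hxs]; field_simp; ring
  constructor
  · rw [key]; positivity
  · rw [key, hxs]
    rw [div_le_iff₀ (by positivity)]
    nlinarith [sq_nonneg (s - 1), sq_nonneg s, sq_nonneg (s*s - 1)]

/-- Continuous induction on `[0, ∞)`. -/
lemma CMF_induction {P : ℝ → Prop} (h0 : P 0)
    (hclosed : ∀ c > (0:ℝ), (∀ s ∈ Ico (0:ℝ) c, P s) → P c)
    (hstep : ∀ c ≥ (0:ℝ), (∀ s ∈ Icc (0:ℝ) c, P s) → ∃ ε > (0:ℝ), ∀ s ∈ Icc c (c + ε), P s) :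
    ∀ τ ≥ (0:ℝ), P τ := by
  intro b hb
  set S := {t : ℝ | t ∈ Icc (0:ℝ) b ∧ ∀ s ∈ Icc (0:ℝ) t, P s} with hSdef
  have hS0 : (0:ℝ) ∈ S := by
    refine ⟨⟨le_refl _, hb⟩, fun s hs => ?_⟩
    have : s = 0 := le_antisymm hs.2 hs.1
    rw [this]; exact h0
  have hSbd : BddAbove S := ⟨b, fun t ht => ht.1.2⟩
  set c := sSup S with hc
  have hc0 : 0 ≤ c := le_csSup hSbd hS0
  have hcb : c ≤ b := csSup_le ⟨0, hS0⟩ (fun t ht => ht.1.2)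
  have hall : ∀ s ∈ Ico (0:ℝ) c, P s := by
    rintro s ⟨hs0, hsc⟩
    obtain ⟨t, htS, hst⟩ := exists_lt_of_lt_csSup ⟨0, hS0⟩ hsc
    exact htS.2 s ⟨hs0, le_of_lt hst⟩
  have hPc : P c := by
    rcases eq_or_lt_of_le hc0 with h | h
    · rw [← h]; exact h0
    · exact hclosed c h hall
  have hIcc : ∀ s ∈ Icc (0:ℝ) c, P s := by
    rintro s ⟨hs0, hsc⟩
    rcases eq_or_lt_of_le hsc with h | h
    · rw [h]; exact hPc
    · exact hall s ⟨hs0, h⟩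
  rcases eq_or_lt_of_le hcb with h | h
  · exact hIcc b ⟨hb, le_of_eq h.symm⟩
  · exfalso
    obtain ⟨ε, hε, hstep'⟩ := hstep c hc0 hIcc
    set t := min (c + ε) b with ht
    have hct : c < t := lt_min (by linarith) h
    have htS : t ∈ S := by
      refine ⟨⟨by linarith, min_le_right _ _⟩, fun s hs => ?_⟩
      rcases le_or_gt s c with h' | h'
      · exact hIcc s ⟨hs.1, h'⟩
      · exact hstep' s ⟨le_of_lt h', le_trans hs.2 (min_le_left _ _)⟩
    have : t ≤ c := le_csSup hSbd htS
    linarith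


lemma CMF_monoIcc {F F' : ℝ → ℝ} {a b : ℝ} (hF : ∀ τ ∈ Icc a b, HasDerivAt F (F' τ) τ)
    (h' : ∀ τ ∈ Icc a b, 0 ≤ F' τ) : MonotoneOn F (Icc a b) := by
  apply monotoneOn_of_deriv_nonneg (convex_Icc a b)
  · exact fun τ hτ => ((hF τ hτ).continuousAt).continuousWithinAt
  · rw [interior_Icc]
    exact fun τ hτ => ((hF τ (Ioo_subset_Icc_self hτ)).differentiableAt).differentiableWithinAt
  · rw [interior_Icc]
    intro τ hτ
    rw [(hF τ (Ioo_subset_Icc_self hτ)).deriv]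
    exact h' τ (Ioo_subset_Icc_self hτ)

lemma CMF_antiIcc {F F' : ℝ → ℝ} {a b : ℝ} (hF : ∀ τ ∈ Icc a b, HasDerivAt F (F' τ) τ)
    (h' : ∀ τ ∈ Icc a b, F' τ ≤ 0) : AntitoneOn F (Icc a b) := by
  apply antitoneOn_of_deriv_nonpos (convex_Icc a b)
  · exact fun τ hτ => ((hF τ hτ).continuousAt).continuousWithinAt
  · rw [interior_Icc]
    exact fun τ hτ => ((hF τ (Ioo_subset_Icc_self hτ)).differentiableAt).differentiableWithinAt
  · rw [interior_Icc]
    intro τ hτ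
    rw [(hF τ (Ioo_subset_Icc_self hτ)).deriv]
    exact h' τ (Ioo_subset_Icc_self hτ)


/-- Invariance: solutions starting in `(0, δ₀)` stay in `(0, r]`. -/
lemma CMF_invariant {K δ₀ : ℝ} {h R : ℝ → ℝ} (hK : 0 < K)
    (hδ1 : δ₀ ≤ 1/2) (hδ2 : δ₀ ≤ 1/(2*K)) (hδpos : 0 < δ₀)
    (hh : ∀ x : ℝ, |x| ≤ δ₀ → |h x| ≤ K * |x|^7)
    (hR : ∀ τ ∈ Ici (0:ℝ), HasDerivAt R (-(R τ)^3 - (R τ)^5 + h (R τ)) τ)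
    (hR0 : 0 < R 0) (hRδ : R 0 < δ₀) :
    ∀ τ ≥ (0:ℝ), R 0 * Real.exp (-τ) ≤ R τ ∧ R τ ≤ R 0 := by
  set r := R 0 with hr
  -- pointwise bound on h
  have hhb : ∀ ρ : ℝ, 0 < ρ → ρ < δ₀ → |h ρ| ≤ ρ^3 / 2 := by
    intro ρ hρ0 hρδ
    have h1 : |h ρ| ≤ K * ρ^7 := by
      have := hh ρ (by rw [abs_of_pos hρ0]; linarith)
      rwa [abs_of_pos hρ0] at this
    have hρ1 : ρ ≤ 1/2 := by linarith
    have h2 : K * ρ^4 ≤ 1/2 := by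
      have hρle1 : ρ ≤ 1 := by linarith
      have h3 : ρ^3 ≤ 1 := pow_le_one₀ (le_of_lt hρ0) hρle1
      have hρ4 : ρ^4 ≤ ρ := by nlinarith
      have h5 : K * ρ^4 ≤ K * ρ := by nlinarith
      have h6 : K * ρ ≤ K * δ₀ := by nlinarith
      have h7 : K * δ₀ ≤ K * (1/(2*K)) := by nlinarith
      have h8 : K * (1/(2*K)) = 1/2 := by field_simp
      linarith
    calc |h ρ| ≤ K * ρ^7 := h1
      _ = (K * ρ^4) * ρ^3 := by ring
      _ ≤ (1/2) * ρ^3 := mul_le_mul_of_nonneg_right h2 (le_of_lt (pow_pos hρ0 3))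
      _ = ρ^3 / 2 := by ring
  apply CMF_induction
  · constructor <;> simp [hr]
  · -- closedness
    intro c hc hIco
    have hcont : ContinuousAt R c := (hR c (le_of_lt hc)).continuousAt
    have hev : ∀ᶠ s in 𝓝[<] c, r * Real.exp (-s) ≤ R s ∧ R s ≤ r := by
      have hIoo : Ioo (0:ℝ) c ∈ 𝓝[<] c := Ioo_mem_nhdsLT_of_mem ⟨hc, le_refl c⟩
      filter_upwards [hIoo] with s hs using hIco s ⟨le_of_lt hs.1, hs.2⟩
    have htR : Tendsto R (𝓝[<] c) (𝓝 (R c)) := hcont.continuousWithinAt.tendsto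
    have htE : Tendsto (fun s => r * Real.exp (-s)) (𝓝[<] c) (𝓝 (r * Real.exp (-c))) := by
      apply Tendsto.mono_left _ nhdsWithin_le_nhds
      exact (Continuous.tendsto (by continuity) c)
    constructor
    · exact le_of_tendsto_of_tendsto htE htR (hev.mono fun s hs => hs.1)
    · exact le_of_tendsto htR (hev.mono fun s hs => hs.2)
  · -- step
    intro c hc hIcc
    have hPc := hIcc c ⟨hc, le_refl c⟩
    have hRc1 : 0 < R c := lt_of_lt_of_le (by positivity) hPc.1
    have hRc2 : R c < δ₀ := lt_of_le_of_lt hPc.2 hRδ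
    have hcont : ContinuousAt R c := (hR c hc).continuousAt
    have hpre : R ⁻¹' (Ioo 0 δ₀) ∈ 𝓝 c := hcont.preimage_mem_nhds (Ioo_mem_nhds hRc1 hRc2)
    obtain ⟨ε, hε, hball⟩ := Metric.mem_nhds_iff.mp hpre
    refine ⟨ε/2, by linarith, ?_⟩
    have hsub : ∀ s ∈ Icc c (c + ε/2), 0 < R s ∧ R s < δ₀ := by
      intro s hs
      have : s ∈ Metric.ball c ε := by
        rw [Metric.mem_ball, Real.dist_eq, abs_of_nonneg (by linarith [hs.1])]
        linarith [hs.2]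
      exact ⟨(hball this).1, (hball this).2⟩
    have hDs : ∀ s ∈ Icc c (c + ε/2), HasDerivAt R (-(R s)^3 - (R s)^5 + h (R s)) s :=
      fun s hs => hR s (le_trans hc hs.1)
    -- f-bounds on the interval
    have hfub : ∀ s ∈ Icc c (c + ε/2), -(R s)^3 - (R s)^5 + h (R s) ≤ 0 := by
      intro s hs
      obtain ⟨h1, h2⟩ := hsub s hs
      have := hhb (R s) h1 h2
      have := abs_le.mp this
      nlinarith [pow_pos h1 3, pow_pos h1 5]
    have hflb : ∀ s ∈ Icc c (c + ε/2), -(R s) ≤ -(R s)^3 - (R s)^5 + h (R s) := by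
      intro s hs
      obtain ⟨h1, h2⟩ := hsub s hs
      have hb := abs_le.mp (hhb (R s) h1 h2)
      have hρ1 : R s ≤ 1/2 := by linarith
      have hsq : R s * R s ≤ 1/4 := by nlinarith
      nlinarith [hb.1, pow_pos h1 3, pow_pos h1 5, hsq, mul_pos h1 h1,
        mul_le_mul_of_nonneg_left hsq (le_of_lt h1)]
    -- R is antitone on the interval
    have hanti : AntitoneOn R (Icc c (c + ε/2)) := CMF_antiIcc hDs hfub
    -- exp * R is monotone on the interval
    have hmono : MonotoneOn (fun s => Real.exp s * R s) (Icc c (c + ε/2)) := by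
      apply CMF_monoIcc (F' := fun s => Real.exp s * R s + Real.exp s * (-(R s)^3 - (R s)^5 + h (R s)))
      · intro s hs
        exact (Real.hasDerivAt_exp s).mul (hDs s hs)
      · intro s hs
        have h1 := hflb s hs
        have h2 := Real.exp_pos s
        nlinarith
    intro s hs
    have hcmem : c ∈ Icc c (c + ε/2) := ⟨le_refl c, by linarith⟩
    constructor
    · have h1 : Real.exp c * R c ≤ Real.exp s * R s := hmono hcmem hs hs.1
      have h2 : r ≤ Real.exp c * R c := by
        have h3 := hPc.1
        have hec := Real.exp_pos c
        rw [Real.exp_neg] at h3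
        have h4 := mul_le_mul_of_nonneg_left h3 (le_of_lt hec)
        calc r = Real.exp c * (r * (Real.exp c)⁻¹) := by field_simp
          _ ≤ Real.exp c * R c := h4
      have hes := Real.exp_pos s
      have h5 : r ≤ R s * Real.exp s := by
        calc r ≤ Real.exp c * R c := h2
          _ ≤ Real.exp s * R s := h1
          _ = R s * Real.exp s := by ring
      rw [Real.exp_neg, ← div_eq_mul_inv, div_le_iff₀ hes]
      linarith
    · calc R s ≤ R c := hanti hcmem hs hs.1
        _ ≤ r := hPc.2

set_option maxHeartbeats 2000000 in
lemma CMF_main {K δ₀ : ℝ} {h R : ℝ → ℝ} (hK : 0 < K)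
    (hδ1 : δ₀ ≤ 1/2) (hδ2 : δ₀ ≤ 1/(2*K)) (hδpos : 0 < δ₀)
    (hh : ∀ x : ℝ, |x| ≤ δ₀ → |h x| ≤ K * |x|^7)
    (hR : ∀ τ ∈ Ici (0:ℝ), HasDerivAt R (-(R τ)^3 - (R τ)^5 + h (R τ)) τ)
    (hR0 : 0 < R 0) (hRδ : R 0 < δ₀) :
    ∃ (C : ℝ) (E : ℝ → ℝ),
      (∀ᶠ τ in atTop,
        R τ = (1 / Real.sqrt (2 * τ)) * (1 - (1 / (4 * τ)) * (Real.log τ + C) + E τ)) ∧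
      E =o[atTop] (fun τ => 1 / τ) := by
  have hInv := CMF_invariant hK hδ1 hδ2 hδpos hh hR hR0 hRδ
  have hpos : ∀ τ ∈ Ici (0:ℝ), 0 < R τ := fun τ hτ =>
    lt_of_lt_of_le (by positivity) (hInv τ hτ).1
  have hler : ∀ τ ∈ Ici (0:ℝ), R τ ≤ R 0 := fun τ hτ => (hInv τ hτ).2
  set r := R 0 with hr
  set u : ℝ → ℝ := fun τ => ((R τ)^2)⁻¹ with hu
  set g : ℝ → ℝ := fun τ => -2 * h (R τ) / (R τ)^3 with hgdef
  set u0 : ℝ := (r^2)⁻¹ with hu0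
  have hu0pos : 0 < u0 := by positivity
  have hu00 : u 0 = u0 := rfl
  -- derivative of u
  have hu' : ∀ τ ∈ Ici (0:ℝ), HasDerivAt u (2 + 2*(R τ)^2 + g τ) τ := by
    intro τ hτ
    have hρ : R τ ≠ 0 := ne_of_gt (hpos τ hτ)
    have hd := ((hR τ hτ).fun_pow 2).fun_inv (pow_ne_zero 2 hρ)
    refine hd.congr_deriv ?_
    simp only [hgdef]
    field_simp [hρ]
    ring
  -- pointwise bounds
  have hρδ : ∀ τ ∈ Ici (0:ℝ), R τ < δ₀ := fun τ hτ => lt_of_le_of_lt (hler τ hτ) hRδ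
  have hgb : ∀ τ ∈ Ici (0:ℝ), |g τ| ≤ 2*K*((R τ)^2)^2 := by
    intro τ hτ
    have h1 := hpos τ hτ
    have h2 := hρδ τ hτ
    have hb : |h (R τ)| ≤ K * (R τ)^7 := by
      have := hh (R τ) (by rw [abs_of_pos h1]; linarith)
      rwa [abs_of_pos h1] at this
    rw [hgdef]
    simp only
    rw [abs_div, abs_of_pos (pow_pos h1 3), abs_mul]
    rw [div_le_iff₀ (pow_pos h1 3)]
    have : |(-2:ℝ)| = 2 := by norm_num
    rw [this]
    nlinarith [abs_nonneg (h (R τ)), pow_pos h1 3]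
  have hKρ : ∀ τ ∈ Ici (0:ℝ), K * (R τ)^2 ≤ 1/2 := by
    intro τ hτ
    have h1 := hpos τ hτ
    have h2 := hρδ τ hτ
    have hρ1 : R τ ≤ 1/2 := by linarith
    have h7 : K * δ₀ ≤ K * (1/(2*K)) := by nlinarith
    have h8 : K * (1/(2*K)) = 1/2 := by field_simp
    nlinarith
  have h2τ : ∀ τ : ℝ, HasDerivAt (fun τ : ℝ => 2*τ) 2 τ := by
    intro τ; simpa using (hasDerivAt_id τ).const_mul (2:ℝ)
  have haff : ∀ τ : ℝ, HasDerivAt (fun τ : ℝ => u0 + 2*τ) 2 τ := by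
    intro τ; simpa using (h2τ τ).const_add u0
  have haffpos : ∀ τ : ℝ, 0 ≤ τ → 0 < u0 + 2*τ := by
    intro τ hτ; linarith
  -- lower bound u τ ≥ u0 + 2τ
  have hu_lb : ∀ τ ∈ Ici (0:ℝ), u0 + 2*τ ≤ u τ := by
    have hmono : MonotoneOn (fun τ => u τ - 2*τ) (Ici 0) := by
      apply CMF_mono (F' := fun τ => (2 + 2*(R τ)^2 + g τ) - 2)
      · intro τ hτ
        exact (hu' τ hτ).sub (h2τ τ)
      · intro τ hτ
        have h1 := (abs_le.mp (hgb τ hτ)).1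
        have h2 := hKρ τ hτ
        have h3 := sq_nonneg (R τ)
        nlinarith [mul_le_mul_of_nonneg_right h2 (sq_nonneg (R τ))]
    intro τ hτ
    have hm : u 0 - 2*0 ≤ u τ - 2*τ := hmono self_mem_Ici hτ (by exact hτ)
    rw [hu00] at hm
    linarith
  -- monotone inverse bound : (R τ)² ≤ (u0+2τ)⁻¹
  have hρ2le : ∀ τ ∈ Ici (0:ℝ), (R τ)^2 ≤ (u0 + 2*τ)⁻¹ := by
    intro τ hτ
    have h1 := hu_lb τ hτ
    have h2 := haffpos τ hτ
    have h3 := hpos τ hτ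
    have huv : (u τ)⁻¹ = (R τ)^2 := by simp [hu]
    rw [← huv]
    exact inv_anti₀ h2 h1
  -- upper bound
  set N : ℝ → ℝ := fun τ => u0 + (3/2)*(Real.log (u0 + 2*τ) - Real.log u0) with hN
  have hu_ub : ∀ τ ∈ Ici (0:ℝ), u τ ≤ 2*τ + N τ := by
    have hmono : MonotoneOn (fun τ => (2*τ + N τ) - u τ) (Ici 0) := by
      apply CMF_mono (F' := fun τ => (2 + (3/2)*(2/(u0+2*τ))) - (2 + 2*(R τ)^2 + g τ))
      · intro τ hτ
        have hne : u0 + 2*τ ≠ 0 := ne_of_gt (haffpos τ hτ)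
        have hlog : HasDerivAt (fun τ : ℝ => Real.log (u0 + 2*τ)) (2/(u0+2*τ)) τ :=
          (haff τ).log hne
        have hNd : HasDerivAt N ((3/2)*(2/(u0+2*τ))) τ := by
          rw [hN]
          exact ((hlog.sub_const (Real.log u0)).const_mul ((3:ℝ)/2)).const_add u0
        exact ((h2τ τ).add hNd).sub (hu' τ hτ)
      · intro τ hτ
        have h1 := (abs_le.mp (hgb τ hτ)).2
        have h2 := hKρ τ hτ
        have h3 := hρ2le τ hτ
        have h4 := haffpos τ hτ
        have h5 : (3/2)*(2/(u0+2*τ)) = 3*(u0+2*τ)⁻¹ := by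
          rw [div_eq_mul_inv]; ring
        rw [h5]
        nlinarith [mul_le_mul_of_nonneg_right h2 (sq_nonneg (R τ)), sq_nonneg (R τ)]
    intro τ hτ
    have hm : (2*0 + N 0) - u 0 ≤ (2*τ + N τ) - u τ := hmono self_mem_Ici hτ (by exact hτ)
    have hN0 : N 0 = u0 := by
      simp only [hN]; norm_num
    rw [hu00, hN0] at hm
    linarith
  have hupos : ∀ τ ∈ Ici (0:ℝ), 0 < u τ := by
    intro τ hτ; have := hpos τ hτ; positivity
  -- the function v and its limit constant
  set M : ℝ := 2*K + 2 with hM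
  set v : ℝ → ℝ := fun τ => u τ - 2*τ - Real.log (u τ) with hv
  obtain ⟨C₂, hv_close⟩ :
      ∃ C₂ : ℝ, ∀ τ ∈ Ici (0:ℝ), |v τ - C₂| ≤ M/2 * (u0 + 2*τ)⁻¹ := by
    have hMpos : 0 < M := by rw [hM]; linarith
    have hv' : ∀ τ ∈ Ici (0:ℝ), HasDerivAt v
        ((2 + 2*(R τ)^2 + g τ) - 2 - (2 + 2*(R τ)^2 + g τ)/(u τ)) τ := by
      intro τ hτ
      exact ((hu' τ hτ).sub (h2τ τ)).sub ((hu' τ hτ).log (ne_of_gt (hupos τ hτ)))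
    have hv'b : ∀ τ ∈ Ici (0:ℝ),
        |(2 + 2*(R τ)^2 + g τ) - 2 - (2 + 2*(R τ)^2 + g τ)/(u τ)| ≤ M * ((u0+2*τ)⁻¹)^2 := by
      intro τ hτ
      have hρpos := hpos τ hτ
      have h1 := abs_le.mp (hgb τ hτ)
      have h2 := hρ2le τ hτ
      have h4 := haffpos τ hτ
      have hρ1 : R τ ≤ 1/2 := by have := hρδ τ hτ; linarith
      have hρ2one : (R τ)^2 ≤ 1 := by nlinarith
      have huv : (u τ)⁻¹ = (R τ)^2 := by simp [hu]
      have hdiv : (2 + 2*(R τ)^2 + g τ)/(u τ) = (2 + 2*(R τ)^2 + g τ) * (R τ)^2 := by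
        rw [div_eq_mul_inv, huv]
      rw [hdiv]
      have hexp : (2 + 2*(R τ)^2 + g τ) - 2 - (2 + 2*(R τ)^2 + g τ)*(R τ)^2
          = g τ * (1 - (R τ)^2) - 2*((R τ)^2)^2 := by ring
      rw [hexp]
      have habs1 : |g τ * (1 - (R τ)^2) - 2*((R τ)^2)^2|
          ≤ |g τ| * |1 - (R τ)^2| + 2*((R τ)^2)^2 := by
        calc |g τ * (1 - (R τ)^2) - 2*((R τ)^2)^2|
            ≤ |g τ * (1 - (R τ)^2)| + |2*((R τ)^2)^2| := abs_sub _ _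
          _ = |g τ| * |1 - (R τ)^2| + 2*((R τ)^2)^2 := by
              rw [abs_mul, abs_of_nonneg (by positivity : (0:ℝ) ≤ 2*((R τ)^2)^2)]
      have habs2 : |1 - (R τ)^2| ≤ 1 := by
        rw [abs_le]; constructor <;> nlinarith [sq_nonneg (R τ)]
      have h5 : |g τ| * |1 - (R τ)^2| ≤ 2*K*((R τ)^2)^2 := by
        calc |g τ| * |1 - (R τ)^2| ≤ |g τ| * 1 :=
              mul_le_mul_of_nonneg_left habs2 (abs_nonneg _)
          _ = |g τ| := by ring
          _ ≤ 2*K*((R τ)^2)^2 := hgb τ hτ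
      have h6 : ((R τ)^2)^2 ≤ ((u0+2*τ)⁻¹)^2 := by
        apply pow_le_pow_left₀ (sq_nonneg _) h2
      calc |g τ * (1 - (R τ)^2) - 2*((R τ)^2)^2|
          ≤ 2*K*((R τ)^2)^2 + 2*((R τ)^2)^2 := by linarith
        _ = M * ((R τ)^2)^2 := by rw [hM]; ring
        _ ≤ M * ((u0+2*τ)⁻¹)^2 := mul_le_mul_of_nonneg_left h6 (le_of_lt hMpos)
    set w : ℝ → ℝ := fun τ => M/2 * (u0+2*τ)⁻¹ with hw
    have hw' : ∀ τ ∈ Ici (0:ℝ), HasDerivAt w (M/2 * (-2/(u0+2*τ)^2)) τ := by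
      intro τ hτ
      exact ((haff τ).inv (ne_of_gt (haffpos τ hτ))).const_mul (M/2)
    have hwval : ∀ τ : ℝ, 0 ≤ τ → M/2 * (-2/(u0+2*τ)^2) = -(M * ((u0+2*τ)⁻¹)^2) := by
      intro τ hτ
      have := haffpos τ hτ
      rw [inv_pow]
      field_simp
    have hwpos : ∀ τ : ℝ, 0 ≤ τ → 0 ≤ w τ := by
      intro τ hτ
      have := haffpos τ hτ
      simp only [hw]
      positivity
    have hanti : AntitoneOn (fun τ => v τ + w τ) (Ici 0) := by
      apply CMF_anti (F' := fun τ =>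
        ((2 + 2*(R τ)^2 + g τ) - 2 - (2 + 2*(R τ)^2 + g τ)/(u τ)) + M/2 * (-2/(u0+2*τ)^2))
      · intro τ hτ; exact (hv' τ hτ).add (hw' τ hτ)
      · intro τ hτ
        have h1 := (abs_le.mp (hv'b τ hτ)).2
        rw [hwval τ hτ]
        linarith
    have hmonoq : MonotoneOn (fun τ => v τ - w τ) (Ici 0) := by
      apply CMF_mono (F' := fun τ =>
        ((2 + 2*(R τ)^2 + g τ) - 2 - (2 + 2*(R τ)^2 + g τ)/(u τ)) - M/2 * (-2/(u0+2*τ)^2))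
      · intro τ hτ; exact (hv' τ hτ).sub (hw' τ hτ)
      · intro τ hτ
        have h1 := (abs_le.mp (hv'b τ hτ)).1
        rw [hwval τ hτ]
        linarith
    have hqlep : ∀ σ ∈ Ici (0:ℝ), v σ - w σ ≤ v σ + w σ := by
      intro σ hσ
      have := hwpos σ hσ
      linarith
    have hne : ((fun τ => v τ + w τ) '' Ici 0).Nonempty :=
      ⟨v 0 + w 0, mem_image_of_mem _ self_mem_Ici⟩
    have hbdd : BddBelow ((fun τ => v τ + w τ) '' Ici 0) := by
      refine ⟨v 0 - w 0, ?_⟩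
      rintro y ⟨σ, hσ, rfl⟩
      calc v 0 - w 0 ≤ v σ - w σ := hmonoq self_mem_Ici hσ (by exact hσ)
        _ ≤ v σ + w σ := hqlep σ hσ
    refine ⟨sInf ((fun τ => v τ + w τ) '' Ici 0), ?_⟩
    intro τ hτ
    have hple : sInf ((fun τ => v τ + w τ) '' Ici 0) ≤ v τ + w τ :=
      csInf_le hbdd (mem_image_of_mem _ hτ)
    have hqle : v τ - w τ ≤ sInf ((fun τ => v τ + w τ) '' Ici 0) := by
      apply le_csInf hne
      rintro y ⟨σ, hσ, rfl⟩
      rcases le_total τ σ with h' | h'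
      · exact le_trans (hmonoq hτ hσ h') (hqlep σ hσ)
      · exact le_trans (hqlep τ hτ) (hanti hσ hτ h')
    have hwτ : w τ = M/2 * (u0 + 2*τ)⁻¹ := rfl
    rw [abs_le]
    constructor
    · rw [← hwτ]; linarith
    · rw [← hwτ]; linarith
  -- final assembly
  set C : ℝ := C₂ + Real.log 2 with hC
  set E : ℝ → ℝ := fun τ => Real.sqrt (2*τ) * R τ - 1 + (1/(4*τ))*(Real.log τ + C) with hE
  refine ⟨C, E, ?_, ?_⟩
  · filter_upwards [eventually_gt_atTop (0:ℝ)] with τ hτ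
    have hs : Real.sqrt (2*τ) ≠ 0 := ne_of_gt (Real.sqrt_pos.mpr (by linarith))
    have heq : 1 - (1/(4*τ))*(Real.log τ + C) + E τ = Real.sqrt (2*τ) * R τ := by
      rw [hE]; ring
    rw [heq, one_div, inv_mul_cancel_left₀ hs]
  · -- littleO part
    have htend : Tendsto (fun τ => τ * E τ) atTop (𝓝 0) := by
      -- the dominating function
      set B : ℝ → ℝ := fun τ =>
        (N τ)^2/(4*τ) + (M/2*(u0+2*τ)⁻¹ + N τ/(2*τ))/4 with hB
      -- B tends to zero
      have hcomp : Tendsto (fun τ : ℝ => u0 + 2*τ) atTop atTop := by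
        apply tendsto_atTop_add_const_left
        exact Tendsto.const_mul_atTop two_pos tendsto_id
      have hLn : ∀ n : ℕ, Tendsto (fun τ : ℝ => (Real.log (u0 + 2*τ))^n / τ) atTop (𝓝 0) := by
        intro n
        have h1 := (Real.tendsto_pow_log_div_mul_add_atTop (1/2) (-u0/2) n (by norm_num)).comp
          hcomp
        have h2 : ((fun x => Real.log x ^ n / (1/2 * x + -u0/2)) ∘ fun τ : ℝ => u0 + 2*τ)
            = fun τ : ℝ => (Real.log (u0 + 2*τ))^n / τ := by
          funext τ
          simp only [Function.comp_apply]
          congr 1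
          ring
        rwa [h2] at h1
      have hL1 : Tendsto (fun τ : ℝ => Real.log (u0 + 2*τ) / τ) atTop (𝓝 0) := by
        have := hLn 1
        simpa using this
      have hL2 : Tendsto (fun τ : ℝ => (Real.log (u0 + 2*τ))^2 / τ) atTop (𝓝 0) := hLn 2
      have hL0 : Tendsto (fun τ : ℝ => 1/τ) atTop (𝓝 0) := by
        simpa using (tendsto_inv_atTop_zero : Tendsto (fun x : ℝ => x⁻¹) atTop (𝓝 0))
      have hL3 : Tendsto (fun τ : ℝ => (u0 + 2*τ)⁻¹) atTop (𝓝 0) :=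
        (tendsto_inv_atTop_zero : Tendsto (fun x : ℝ => x⁻¹) atTop (𝓝 0)).comp hcomp
      have hBtend : Tendsto B atTop (𝓝 0) := by
        set P : ℝ := u0 - (3/2)*Real.log u0 with hP
        have hNP : ∀ τ : ℝ, N τ = P + (3/2)*Real.log (u0 + 2*τ) := by
          intro τ
          simp only [hN, hP]
          ring
        have hcombo : Tendsto (fun τ : ℝ =>
            (P^2/4 + P/8) * (1/τ) + ((3*P/4) + 3/16) * (Real.log (u0 + 2*τ)/τ)
            + (9/16) * ((Real.log (u0 + 2*τ))^2/τ) + (M/8) * ((u0+2*τ)⁻¹))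
            atTop (𝓝 0) := by
          have := (((hL0.const_mul (P^2/4 + P/8)).add
            (hL1.const_mul ((3*P/4) + 3/16))).add
            (hL2.const_mul (9/16))).add (hL3.const_mul (M/8))
          simpa using this
        apply hcombo.congr'
        filter_upwards [eventually_ge_atTop (1:ℝ)] with τ hτ1
        have hτ0 : (0:ℝ) < τ := by linarith
        have hu2 : (0:ℝ) < u0 + 2*τ := by linarith
        rw [hB]
        simp only
        rw [hNP τ]
        field_simp
        ring
      -- the pointwise bound
      apply squeeze_zero_norm' _ hBtend
      filter_upwards [eventually_ge_atTop (1:ℝ)] with τ hτ1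
      have hτ0 : (0:ℝ) < τ := by linarith
      have hτmem : τ ∈ Ici (0:ℝ) := le_of_lt hτ0
      have hup := hupos τ hτmem
      have hlb := hu_lb τ hτmem
      have hub := hu_ub τ hτmem
      have hρpos := hpos τ hτmem
      have hsτ : (0:ℝ) < 2*τ := by linarith
      set x : ℝ := (u τ - 2*τ)/(2*τ) with hx
      have hx0 : 0 < x := div_pos (by linarith) hsτ
      have h1x : 1 + x = u τ / (2*τ) := by
        rw [hx]
        field_simp
        ring
      have hsqrtu : Real.sqrt (u τ) = (R τ)⁻¹ := by
        show Real.sqrt (((R τ)^2)⁻¹) = (R τ)⁻¹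
        rw [Real.sqrt_inv, Real.sqrt_sq (le_of_lt hρpos)]
      have key1 : Real.sqrt (2*τ) * R τ = 1/Real.sqrt (1+x) := by
        rw [h1x, Real.sqrt_div (le_of_lt hup) (2*τ), hsqrtu, one_div_div, div_inv_eq_mul]
      have hest := CMF_sqrt_est (le_of_lt hx0)
      set A : ℝ := 1/Real.sqrt (1+x) - 1 + x/2 with hA
      have hsx : Real.sqrt (1+x) ≠ 0 := by
        apply ne_of_gt
        apply Real.sqrt_pos.mpr
        linarith
      have hx2τ : x * (2*τ) = u τ - 2*τ := by
        rw [hx]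
        field_simp
      have e2 : τ * E τ = τ * A - (u τ - 2*τ - Real.log τ - C)/4 := by
        have hEτ : E τ = Real.sqrt (2*τ) * R τ - 1 + (1/(4*τ))*(Real.log τ + C) := rfl
        rw [hEτ, key1, hA]
        have h9 : x = (u τ - 2*τ)/(2*τ) := hx
        field_simp
        rw [h9]
        field_simp
        ring
      have hεeq : u τ - 2*τ - Real.log τ - C = (v τ - C₂) + Real.log (1+x) := by
        have hlog2τ : Real.log (2*τ) = Real.log 2 + Real.log τ :=
          Real.log_mul two_ne_zero (ne_of_gt hτ0)
        have hlogx : Real.log (1+x) = Real.log (u τ) - Real.log (2*τ) := by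
          rw [h1x, Real.log_div (ne_of_gt hup) (ne_of_gt hsτ)]
        have hvτ : v τ = u τ - 2*τ - Real.log (u τ) := rfl
        rw [hlogx, hvτ, hC]
        rw [hlog2τ]
        ring
      have hlogx1 : 0 ≤ Real.log (1+x) := Real.log_nonneg (by linarith)
      have hlogx2 : Real.log (1+x) ≤ x := by
        have := Real.log_le_sub_one_of_pos (show (0:ℝ) < 1+x by linarith)
        linarith
      have hvb := hv_close τ hτmem
      have hxN : x ≤ N τ / (2*τ) := by
        rw [hx]
        exact (div_le_div_iff_of_pos_right hsτ).mpr (by linarith)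
      have hεb : |u τ - 2*τ - Real.log τ - C| ≤ M/2*(u0+2*τ)⁻¹ + N τ/(2*τ) := by
        rw [hεeq]
        calc |(v τ - C₂) + Real.log (1+x)| ≤ |v τ - C₂| + |Real.log (1+x)| := abs_add_le _ _
          _ ≤ M/2*(u0+2*τ)⁻¹ + N τ/(2*τ) := by
              rw [abs_of_nonneg hlogx1]
              have h11 : Real.log (1+x) ≤ N τ/(2*τ) := le_trans hlogx2 hxN
              linarith
      have hxsq : τ * x^2 ≤ (N τ)^2/(4*τ) := by
        have h7 : x^2 ≤ (N τ/(2*τ))^2 := pow_le_pow_left₀ (le_of_lt hx0) hxN 2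
        have h8 : τ * (N τ/(2*τ))^2 = (N τ)^2/(4*τ) := by
          field_simp
          ring
        calc τ * x^2 ≤ τ * (N τ/(2*τ))^2 := mul_le_mul_of_nonneg_left h7 (le_of_lt hτ0)
          _ = (N τ)^2/(4*τ) := h8
      have hτA : |τ * A| ≤ τ * x^2 := by
        rw [abs_of_nonneg (mul_nonneg (le_of_lt hτ0) hest.1)]
        exact mul_le_mul_of_nonneg_left hest.2 (le_of_lt hτ0)
      rw [Real.norm_eq_abs, e2]
      have hBτ : B τ = (N τ)^2/(4*τ) + (M/2*(u0+2*τ)⁻¹ + N τ/(2*τ))/4 := rfl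
      rw [hBτ]
      calc |τ * A - (u τ - 2*τ - Real.log τ - C)/4|
          ≤ |τ * A| + |(u τ - 2*τ - Real.log τ - C)/4| := abs_sub _ _
        _ = |τ * A| + |u τ - 2*τ - Real.log τ - C|/4 := by
            rw [abs_div, abs_of_nonneg (by norm_num : (0:ℝ) ≤ (4:ℝ))]
        _ ≤ (N τ)^2/(4*τ) + (M/2*(u0+2*τ)⁻¹ + N τ/(2*τ))/4 := by
            have h15 : |u τ - 2*τ - Real.log τ - C|/4 ≤ (M/2*(u0+2*τ)⁻¹ + N τ/(2*τ))/4 := by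
              linarith
            linarith
    rw [Asymptotics.isLittleO_iff]
    intro c hc
    have h1 : (fun τ => τ * E τ) ⁻¹' (Ioo (-c) c) ∈ atTop :=
      htend (Ioo_mem_nhds (by linarith) hc)
    filter_upwards [h1, eventually_ge_atTop (1:ℝ)] with τ hτ1 hτ2
    have hτ0 : (0:ℝ) < τ := by linarith
    rw [Real.norm_eq_abs, Real.norm_eq_abs, abs_of_pos (show (0:ℝ) < 1/τ by positivity)]
    rw [show c * (1/τ) = c/τ by ring, le_div_iff₀ hτ0]
    calc |E τ| * τ = |τ * E τ| := by
          rw [abs_mul, abs_of_pos hτ0]; ring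
      _ ≤ c := by
          have := abs_lt.mpr ⟨hτ1.1, hτ1.2⟩
          linarith [le_of_lt this]


/-- Every solution of `R' = -R³ - R⁵ + O(R⁷)` with sufficiently small positive initial
data satisfies `R(τ) = (1/√(2τ))(1 - (1/(4τ))(ln τ + C) + o(1/τ))` as `τ → ∞`. -/
theorem center_manifold_flow_asymptotic (K : ℝ) (hK : 0 < K) :
    ∃ δ₀ > (0:ℝ), ∀ (h : ℝ → ℝ) (R : ℝ → ℝ),
      (∀ x : ℝ, |x| ≤ δ₀ → |h x| ≤ K * |x|^7) →
      (∀ τ ∈ Ici (0:ℝ), HasDerivAt R (-(R τ)^3 - (R τ)^5 + h (R τ)) τ) →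
      0 < R 0 → R 0 < δ₀ →
      ∃ (C : ℝ) (E : ℝ → ℝ),
        (∀ᶠ τ in atTop,
          R τ = (1 / Real.sqrt (2 * τ)) * (1 - (1 / (4 * τ)) * (Real.log τ + C) + E τ)) ∧
        E =o[atTop] (fun τ => 1 / τ) := by
  have hδpos : (0:ℝ) < min (1/2) (1/(2*K)) := lt_min (by norm_num) (by positivity)
  refine ⟨min (1/2) (1/(2*K)), hδpos, ?_⟩
  intro h R hh hR hR0 hRδ
  exact CMF_main hK (min_le_left _ _) (min_le_right _ _) hδpos hh hR hR0 hRδ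
end

section
/- Consider the planar system R' = Σ(1+Σ)R, Σ' = -Σ(1-Σ²) - R². For any solution with R > 0 and 1 - Σ² - R² > 0 initially, these inequalities persist and the solution satisfies lim_{τ→∞} Σ(τ) = 0 and lim_{τ→∞} R(τ) = 0; i.e. the origin is the future attractor of the truncated system on the region {R > 0, Σ² + R² < 1}. -/
open Filter Set

lemma ode_exp (f b : ℝ → ℝ) (hb : Continuous b)
    (hf : ∀ τ ∈ Ici (0:ℝ), HasDerivAt f (b τ * f τ) τ) :
    ∀ τ ∈ Ici (0:ℝ), f τ = f 0 * Real.exp (∫ t in (0:ℝ)..τ, b t) := by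
  intro τ hτ
  set A : ℝ → ℝ := fun x => ∫ t in (0:ℝ)..x, b t with hA
  have hAd : ∀ x : ℝ, HasDerivAt A (b x) x := fun x =>
    intervalIntegral.integral_hasDerivAt_right (hb.intervalIntegrable _ _)
      (hb.stronglyMeasurableAtFilter _ _) hb.continuousAt
  have key : ∀ x ∈ Icc (0:ℝ) τ, f x * Real.exp (-A x) = f 0 * Real.exp (-A 0) := by
    apply constant_of_has_deriv_right_zero
    · intro x hx
      exact (((hf x (mem_of_mem_of_subset hx (Icc_subset_Ici_self))).continuousAt).mul
        (((hAd x).neg.exp).continuousAt)).continuousWithinAt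
    · intro x hx
      have hx0 : x ∈ Ici (0:ℝ) := hx.1
      have h1 : HasDerivAt (fun y => f y * Real.exp (-A y))
          (b x * f x * Real.exp (-A x) + f x * (Real.exp (-A x) * -(b x))) x :=
        (hf x hx0).mul ((hAd x).neg.exp)
      have h2 : b x * f x * Real.exp (-A x) + f x * (Real.exp (-A x) * -(b x)) = 0 := by ring
      rw [h2] at h1
      exact h1.hasDerivWithinAt
  have hA0 : A 0 = 0 := by simp [hA]
  have := key τ ⟨hτ, le_rfl⟩
  rw [hA0, neg_zero, Real.exp_zero, mul_one] at this
  field_simp [Real.exp_neg] at this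
  have hx : Real.exp (-A τ) * Real.exp (A τ) = 1 := by rw [← Real.exp_add]; simp
  show f τ = f 0 * Real.exp (A τ)
  linear_combination (Real.exp (A τ)) * this - f τ * hx

set_option maxHeartbeats 2000000 in
/-- For the truncated system `R' = Σ(1+Σ)R`, `Σ' = -Σ(1-Σ²) - R²`, the conditions
`R > 0` and `Σ² + R² < 1` persist, and every such solution tends to the origin:
the origin is the future attractor on `{R > 0, Σ² + R² < 1}`. -/
theorem truncated_system_future_attractor (R S : ℝ → ℝ)
    (hRode : ∀ τ ∈ Ici (0:ℝ), HasDerivAt R (S τ * (1 + S τ) * R τ) τ)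
    (hSode : ∀ τ ∈ Ici (0:ℝ), HasDerivAt S (-(S τ) * (1 - (S τ)^2) - (R τ)^2) τ)
    (hR0 : 0 < R 0) (hΩ0 : (S 0)^2 + (R 0)^2 < 1) :
    (∀ τ ∈ Ici (0:ℝ), 0 < R τ ∧ (S τ)^2 + (R τ)^2 < 1) ∧
    Tendsto S atTop (nhds 0) ∧ Tendsto R atTop (nhds 0) := by
  -- continuity of S and R on Ici 0
  have hScont : ∀ x ∈ Ici (0:ℝ), ContinuousAt S x := fun x hx => (hSode x hx).continuousAt
  have hRcont : ∀ x ∈ Ici (0:ℝ), ContinuousAt R x := fun x hx => (hRode x hx).continuousAt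
  have hmaxc : Continuous (fun τ : ℝ => max τ 0) := continuous_id.max continuous_const
  have hSm : Continuous (fun τ : ℝ => S (max τ 0)) := by
    rw [continuous_iff_continuousAt]
    exact fun x => (hScont (max x 0) (mem_Ici.2 (le_max_right x 0))).comp (f := fun τ : ℝ => max τ 0) (x := x) hmaxc.continuousAt
  -- the coefficient functions
  set b₁ : ℝ → ℝ := fun τ => S (max τ 0) * (1 + S (max τ 0)) with hb₁def
  set b₂ : ℝ → ℝ := fun τ => 2 * (S (max τ 0))^2 with hb₂def
  have hb₁ : Continuous b₁ := hSm.mul (continuous_const.add hSm)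
  have hb₂ : Continuous b₂ := continuous_const.mul (hSm.pow 2)
  set W : ℝ → ℝ := fun τ => 1 - (S τ)^2 - (R τ)^2 with hWdef
  have hW0 : 0 < W 0 := by simp only [hWdef]; linarith
  -- ODEs with the max-ified coefficients
  have hRode' : ∀ τ ∈ Ici (0:ℝ), HasDerivAt R (b₁ τ * R τ) τ := by
    intro τ hτ
    have : max τ 0 = τ := max_eq_left hτ
    simpa [hb₁def, this, mul_comm, mul_assoc, mul_left_comm] using hRode τ hτ
  have hWode : ∀ τ ∈ Ici (0:ℝ), HasDerivAt W (b₂ τ * W τ) τ := by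
    intro τ hτ
    have hm : max τ 0 = τ := max_eq_left hτ
    have h1 : HasDerivAt (fun t => 1 - (S t)^2 - (R t)^2)
        (0 - (2 * S τ * (-(S τ) * (1 - (S τ)^2) - (R τ)^2)) - 2 * R τ * (S τ * (1 + S τ) * R τ)) τ := by
      have hs2 : HasDerivAt (fun t => (S t)^2) (2 * S τ * (-(S τ) * (1 - (S τ)^2) - (R τ)^2)) τ := by
        simpa [mul_comm, mul_assoc] using ((hSode τ hτ).fun_pow 2)
      have hr2 : HasDerivAt (fun t => (R t)^2) (2 * R τ * (S τ * (1 + S τ) * R τ)) τ := by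
        simpa [mul_comm, mul_assoc] using ((hRode τ hτ).fun_pow 2)
      exact ((hasDerivAt_const τ (1:ℝ)).sub hs2).sub hr2
    convert h1 using 1
    simp only [hb₂def, hWdef, hm]
    ring
  -- explicit exponential formulas
  have hRrep := ode_exp R b₁ hb₁ hRode'
  have hWrep := ode_exp W b₂ hb₂ hWode
  have hRpos : ∀ τ ∈ Ici (0:ℝ), 0 < R τ := by
    intro τ hτ; rw [hRrep τ hτ]; positivity
  have hWpos : ∀ τ ∈ Ici (0:ℝ), 0 < W τ := by
    intro τ hτ; rw [hWrep τ hτ]; positivity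
  have hWle1 : ∀ τ, W τ ≤ 1 := by intro τ; simp only [hWdef]; nlinarith [sq_nonneg (S τ), sq_nonneg (R τ)]
  have hS2le : ∀ τ ∈ Ici (0:ℝ), (S τ)^2 ≤ 1 := by
    intro τ hτ; have := hWpos τ hτ; simp only [hWdef] at this; nlinarith [sq_nonneg (R τ)]
  have hR2le : ∀ τ ∈ Ici (0:ℝ), (R τ)^2 ≤ 1 := by
    intro τ hτ; have := hWpos τ hτ; simp only [hWdef] at this; nlinarith [sq_nonneg (S τ)]
  have hSabs : ∀ τ ∈ Ici (0:ℝ), |S τ| ≤ 1 := by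
    intro τ hτ; rw [abs_le]; constructor <;> nlinarith [hS2le τ hτ]
  -- B is monotone, hence W is monotone on Ici 0
  have hBadd : ∀ x y : ℝ, (∫ t in (0:ℝ)..y, b₂ t) = (∫ t in (0:ℝ)..x, b₂ t) + ∫ t in x..y, b₂ t :=
    fun x y => (intervalIntegral.integral_add_adjacent_intervals
      (hb₂.intervalIntegrable 0 x) (hb₂.intervalIntegrable x y)).symm
  have hWmono : MonotoneOn W (Ici (0:ℝ)) := by
    intro x hx y hy hxy
    rw [hWrep x hx, hWrep y hy]
    have hI : (0:ℝ) ≤ ∫ t in x..y, b₂ t :=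
      intervalIntegral.integral_nonneg hxy (fun u _ => by positivity)
    have : (∫ t in (0:ℝ)..x, b₂ t) ≤ ∫ t in (0:ℝ)..y, b₂ t := by rw [hBadd x y]; linarith
    exact mul_le_mul_of_nonneg_left (Real.exp_le_exp.2 this) hW0.le
  -- limit of W
  set Wm : ℝ → ℝ := fun τ => W (max τ 0) with hWm
  have hWmmono : Monotone Wm := fun x y hxy =>
    hWmono (mem_Ici.2 (le_max_right _ _)) (mem_Ici.2 (le_max_right _ _)) (max_le_max hxy le_rfl)
  have hWmbdd : BddAbove (range Wm) := ⟨1, by rintro _ ⟨x, rfl⟩; exact hWle1 _⟩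
  set L : ℝ := ⨆ τ, Wm τ with hLdef
  have hLlim : Tendsto Wm atTop (nhds L) := tendsto_atTop_ciSup hWmmono hWmbdd
  have hWL : Tendsto W atTop (nhds L) := by
    apply hLlim.congr'
    filter_upwards [eventually_ge_atTop (0:ℝ)] with x hx
    simp [hWm, max_eq_left hx]
  have hWleL : ∀ τ ∈ Ici (0:ℝ), W τ ≤ L := by
    intro τ hτ
    have := le_ciSup hWmbdd τ
    simpa [hWm, max_eq_left (mem_Ici.1 hτ)] using this
  have hW0L : W 0 ≤ L := hWleL 0 (mem_Ici.2 le_rfl)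
  have hLle1 : L ≤ 1 := ciSup_le fun τ => hWle1 _
  clear_value L
  -- Lipschitz bound for S on Ici 0
  have hSlip : ∀ t₀ t : ℝ, 0 ≤ t₀ → t₀ ≤ t → |S t - S t₀| ≤ 2 * (t - t₀) := by
    intro t₀ t h0 hle
    have hconv : Convex ℝ (Icc t₀ t) := convex_Icc _ _
    have hbound : ∀ x ∈ Icc t₀ t, ‖-(S x) * (1 - (S x)^2) - (R x)^2‖ ≤ 2 := by
      intro x hx
      have hx0 : x ∈ Ici (0:ℝ) := le_trans h0 hx.1
      have h1 := hS2le x hx0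
      have h2 := hR2le x hx0
      have h3 := hSabs x hx0
      have h4 := sq_nonneg (S x)
      have h5 := sq_nonneg (R x)
      rw [Real.norm_eq_abs, abs_le]
      constructor <;> nlinarith [abs_le.mp h3]
    have := hconv.norm_image_sub_le_of_norm_hasDerivWithin_le
      (f := S) (f' := fun x => -(S x) * (1 - (S x)^2) - (R x)^2)
      (fun x hx => (hSode x (le_trans h0 hx.1)).hasDerivWithinAt) hbound
      (left_mem_Icc.2 hle) (right_mem_Icc.2 hle)
    rw [Real.norm_eq_abs, Real.norm_eq_abs, abs_of_nonneg (by linarith : (0:ℝ) ≤ t - t₀)] at this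
    exact this
  -- S tends to 0
  have hS0 : Tendsto S atTop (nhds 0) := by
    rw [Metric.tendsto_atTop]
    intro ε hε
    set c : ℝ := W 0 * ε^3 / 8 with hcdef
    have hc : 0 < c := by rw [hcdef]; positivity
    clear_value c
    obtain ⟨T, hT⟩ := eventually_atTop.mp
      (((hWL.eventually (eventually_gt_nhds (by linarith : L - c < L))).and
        (eventually_ge_atTop (0:ℝ))))
    refine ⟨T, fun t ht => ?_⟩
    rw [Real.dist_eq, sub_zero]
    by_contra hcon
    push_neg at hcon
    obtain ⟨hΩt, ht0⟩ := hT t ht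
    -- on [t, t+ε/4], |S| ≥ ε/2
    have hSsq : ∀ x ∈ Icc t (t + ε/4), ε^2/4 ≤ (S x)^2 := by
      intro x hx
      have h1 : |S x - S t| ≤ 2 * (x - t) := hSlip t x ht0 hx.1
      have h2 : 2 * (x - t) ≤ ε/2 := by linarith [hx.2]
      have h3 : ε/2 ≤ |S x| := by
        have := abs_sub_abs_le_abs_sub (S t) (S x)
        rw [abs_sub_comm (S t) (S x)] at this
        linarith
      calc ε^2/4 = (ε/2)^2 := by ring
      _ ≤ |S x|^2 := by nlinarith
      _ = (S x)^2 := sq_abs _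
    -- the integral of b₂ over [t, t+ε/4] is at least ε³/8
    have hIlow : ε^3/8 ≤ ∫ x in t..(t + ε/4), b₂ x := by
      have hmono' := intervalIntegral.integral_mono_on (by linarith : t ≤ t + ε/4)
        ((intervalIntegrable_const : IntervalIntegrable (fun _ => ε^2/2) MeasureTheory.volume t (t + ε/4)))
        (hb₂.intervalIntegrable t (t + ε/4))
        (fun x hx => by
          have hx0 : (0:ℝ) ≤ x := le_trans ht0 hx.1
          have := hSsq x hx
          simp only [hb₂def, max_eq_left hx0]
          linarith)
      rw [intervalIntegral.integral_const, smul_eq_mul] at hmono'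
      calc ε^3/8 = (t + ε/4 - t) * (ε^2/2) := by ring
      _ ≤ _ := hmono'
    -- now W (t + ε/4) > L, contradiction
    have h1 : W (t + ε/4) = W t * Real.exp (∫ x in t..(t + ε/4), b₂ x) := by
      rw [hWrep t ht0, hWrep (t + ε/4) (by simp only [mem_Ici]; linarith)]
      rw [hBadd t (t + ε/4), Real.exp_add]
      ring
    have hWt0 : W 0 ≤ W t := hWmono (mem_Ici.2 le_rfl) ht0 ht0
    have hexp : (∫ x in t..(t + ε/4), b₂ x) + 1 ≤ Real.exp (∫ x in t..(t + ε/4), b₂ x) :=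
      Real.add_one_le_exp _
    have hWtpos : 0 < W t := hWpos t ht0
    have hgt : L < W (t + ε/4) := by
      rw [h1]
      have : W t + c ≤ W t * Real.exp (∫ x in t..(t + ε/4), b₂ x) := by
        have h2 : W t * ((∫ x in t..(t + ε/4), b₂ x) + 1) ≤
            W t * Real.exp (∫ x in t..(t + ε/4), b₂ x) :=
          mul_le_mul_of_nonneg_left hexp hWtpos.le
        have h3 : c ≤ W t * (∫ x in t..(t + ε/4), b₂ x) := by
          calc c = W 0 * (ε^3/8) := by rw [hcdef]; ring
          _ ≤ W t * (∫ x in t..(t + ε/4), b₂ x) := by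
              apply mul_le_mul hWt0 hIlow (by positivity) hWtpos.le
        nlinarith
      have hlt : L < W t + c := by linarith
      exact lt_of_lt_of_le hlt this
    exact absurd (hWleL (t + ε/4) (by simp only [mem_Ici]; linarith)) (not_le.2 hgt)
  -- L = 1
  have hL1 : L = 1 := by
    by_contra hne
    have hLlt : L < 1 := lt_of_le_of_ne hLle1 hne
    set m : ℝ := 1 - L with hmdef
    have hm : 0 < m := by rw [hmdef]; linarith
    clear_value m
    have hmle1 : m ≤ 1 := by rw [hmdef]; linarith [hW0L, hW0]
    obtain ⟨T₁, hT₁⟩ := eventually_atTop.mp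
      ((hS0.eventually (Metric.ball_mem_nhds (0:ℝ) (by positivity : (0:ℝ) < m/8))).and
        (eventually_ge_atTop (0:ℝ)))
    -- for t ≥ T₁ : |S t| < m/8 and R t ^ 2 ≥ 7m/8, so S' ≤ -3m/4
    have hR2big : ∀ t, T₁ ≤ t → 7*m/8 ≤ (R t)^2 := by
      intro t ht
      obtain ⟨hS, ht0⟩ := hT₁ t ht
      rw [Real.dist_eq, sub_zero] at hS
      have hWt : W t ≤ L := hWleL t ht0
      have hS2 : (S t)^2 ≤ m/8 := by
        have : (S t)^2 ≤ (m/8)^2 := by nlinarith [abs_nonneg (S t), sq_abs (S t)]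
        nlinarith
      simp only [hWdef] at hWt
      linarith
    have hSder : ∀ t, T₁ ≤ t → -(S t) * (1 - (S t)^2) - (R t)^2 ≤ -(m/2) := by
      intro t ht
      obtain ⟨hS, ht0⟩ := hT₁ t ht
      rw [Real.dist_eq, sub_zero] at hS
      have h1 := hR2big t ht
      have h2 := hS2le t ht0
      have h3 := abs_le.mp (le_of_lt hS)
      have h4 := sq_nonneg (S t)
      nlinarith
    -- antitone of g = S + (m/2) t on [T₁, T₁ + 6/m]
    have hT₁0 : (0:ℝ) ≤ T₁ := (hT₁ T₁ le_rfl).2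
    have hT₂gt : T₁ ≤ T₁ + 6/m := le_add_of_nonneg_right (by positivity)
    have hganti : AntitoneOn (fun t => S t + (m/2) * t) (Icc T₁ (T₁ + 6/m)) := by
      apply antitoneOn_of_deriv_nonpos (convex_Icc _ _)
      · intro x hx
        exact ((hScont x (le_trans hT₁0 hx.1)).add
          (continuous_const.mul continuous_id).continuousAt).continuousWithinAt
      · intro x hx
        rw [interior_Icc] at hx
        have hx0 : x ∈ Ici (0:ℝ) := le_trans hT₁0 hx.1.le
        exact ((hSode x hx0).add ((hasDerivAt_id x).const_mul (m/2))).differentiableAt.differentiableWithinAt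
      · intro x hx
        rw [interior_Icc] at hx
        have hx0 : x ∈ Ici (0:ℝ) := le_trans hT₁0 hx.1.le
        have hd : HasDerivAt (fun t => S t + (m/2) * t) ((-(S x) * (1 - (S x)^2) - (R x)^2) + (m/2) * 1) x :=
          (hSode x hx0).add ((hasDerivAt_id x).const_mul (m/2))
        rw [hd.deriv]
        have := hSder x hx.1.le
        linarith
    have hle := hganti (left_mem_Icc.2 hT₂gt) (right_mem_Icc.2 hT₂gt) hT₂gt
    simp only at hle
    have hS1 := abs_le.mp (hSabs T₁ hT₁0)
    have hS2 := abs_le.mp (hSabs (T₁ + 6/m) (le_trans hT₁0 hT₂gt))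
    have hexp2 : m/2 * (T₁ + 6/m) = m/2 * T₁ + 3 := by field_simp; ring
    linarith [hle, hS1.2, hS2.1, hexp2]
  -- R² tends to 0
  have hW1 : Tendsto W atTop (nhds 1) := hL1 ▸ hWL
  have hR2lim : Tendsto (fun t => (R t)^2) atTop (nhds 0) := by
    have h1 : Tendsto (fun t => 1 - (S t)^2 - W t) atTop (nhds (1 - 0^2 - 1)) :=
      (tendsto_const_nhds.sub (hS0.pow 2)).sub hW1
    have h2 : (fun t => 1 - (S t)^2 - W t) = fun t => (R t)^2 := by
      funext t; simp only [hWdef]; ring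
    rw [h2] at h1
    simpa using h1
  have hRlim : Tendsto R atTop (nhds 0) := by
    have h1 : Tendsto (fun t => Real.sqrt ((R t)^2)) atTop (nhds 0) := by
      have := (Real.continuous_sqrt.tendsto 0).comp hR2lim
      simpa [Function.comp_def] using this
    apply h1.congr'
    filter_upwards [eventually_ge_atTop (0:ℝ)] with x hx
    exact Real.sqrt_sq (hRpos x hx).le
  refine ⟨fun τ hτ => ⟨hRpos τ hτ, ?_⟩, hS0, hRlim⟩
  have := hWpos τ hτ
  simp only [hWdef] at this
  linarith
end

section
/- Let y solve y' = -y³ + ε e^{-γτ}, y(0) = y₀ > 0, and let c = 1/(2y₀²) - ε ∫₀^∞ e^{-γs}/y(s)³ ds. Then w(τ) - c = ε ∫_τ^∞ e^{-γs}/y(s)³ ds ≤ ε ∫_τ^∞ e^{-γs}(2s + 1/y₀²)^{3/2} ds for all τ ≥ 0, where w(τ) = 1/(2y(τ)²) - τ. -/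
open MeasureTheory Filter Set

/-- For a positive solution of `y' = -y³ + ε e^{-γτ}` with `y(0) = y₀ > 0` and
`c = 1/(2y₀²) - ε ∫₀^∞ e^{-γs}/y(s)³ ds`, one has
`w(τ) - c = ε ∫_τ^∞ e^{-γs}/y(s)³ ds ≤ ε ∫_τ^∞ e^{-γs}(2s + 1/y₀²)^{3/2} ds`
for all `τ ≥ 0`, where `w(τ) = 1/(2y(τ)²) - τ`. -/
theorem w_minus_c_integral_bound (ε γ y₀ : ℝ) (hε : 0 < ε) (hγ : 0 < γ)
    (hy₀ : 0 < y₀) (y : ℝ → ℝ) (hy0 : y 0 = y₀)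
    (hpos : ∀ τ ∈ Ici (0:ℝ), 0 < y τ)
    (hode : ∀ τ ∈ Ici (0:ℝ), HasDerivAt y (-(y τ)^3 + ε * Real.exp (-γ * τ)) τ) :
    ∀ τ ∈ Ici (0:ℝ),
      (1 / (2 * (y τ)^2) - τ) -
          (1 / (2 * y₀^2) - ε * ∫ s in Ioi (0:ℝ), Real.exp (-γ * s) / (y s)^3)
        = ε * ∫ s in Ioi τ, Real.exp (-γ * s) / (y s)^3 ∧
      ε * ∫ s in Ioi τ, Real.exp (-γ * s) / (y s)^3
        ≤ ε * ∫ s in Ioi τ, Real.exp (-γ * s) * (2 * s + 1 / y₀^2) ^ ((3:ℝ)/2) := by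
  set c0 : ℝ := 1 / y₀^2 with hc0
  have hc0pos : 0 < c0 := by positivity
  set f : ℝ → ℝ := fun s => Real.exp (-γ * s) / (y s)^3 with hfdef
  set g : ℝ → ℝ := fun s => Real.exp (-γ * s) * (2 * s + c0) ^ ((3:ℝ)/2) with hgdef
  -- continuity of y and f on [0, ∞)
  have hycont : ContinuousOn y (Ici 0) :=
    fun t ht => (hode t ht).continuousAt.continuousWithinAt
  have hfcont : ContinuousOn f (Ici 0) := by
    apply ContinuousOn.div
    · exact (Real.continuous_exp.comp (continuous_const.mul continuous_id)).continuousOn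
    · exact hycont.pow 3
    · intro s hs
      have := hpos s hs
      positivity
  have hfpos : ∀ s ∈ Ici (0:ℝ), 0 < f s := by
    intro s hs
    have := hpos s hs
    simp only [hfdef]
    positivity
  -- derivative of w
  have hw : ∀ t ∈ Ici (0:ℝ), HasDerivAt (fun t => 1/(2*(y t)^2) - t) (-(ε * f t)) t := by
    intro t ht
    have hyt := hpos t ht
    have hy' := hode t ht
    have h1 : HasDerivAt (fun t => (y t)^2)
        ((2:ℕ) * y t ^ 1 * (-(y t)^3 + ε * Real.exp (-γ*t))) t := hy'.pow 2
    have h2 : HasDerivAt (fun t => ((y t)^2)⁻¹)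
        (-((2:ℕ) * y t ^ 1 * (-(y t)^3 + ε * Real.exp (-γ*t))) / ((y t)^2)^2) t :=
      h1.inv (by positivity)
    have h3 := (h2.div_const 2).sub (hasDerivAt_id t)
    have hfun : (fun t => 1/(2*(y t)^2) - t) = (fun t => ((y t)^2)⁻¹ / 2 - t) := by
      funext u; rw [one_div, mul_inv]; ring
    rw [hfun]
    convert h3 using 1
    · rfl
    · rfl
    · rfl
    simp only [hfdef]
    have hne : y t ≠ 0 := hyt.ne'
    field_simp
    ring
  -- w is antitone on [0,∞)
  have hanti : AntitoneOn (fun t => 1/(2*(y t)^2) - t) (Ici 0) := by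
    apply antitoneOn_of_deriv_nonpos (convex_Ici 0)
    · exact fun t ht => (hw t ht).continuousAt.continuousWithinAt
    · intro t ht
      rw [interior_Ici] at ht
      exact (hw t (mem_Ici.mpr (le_of_lt ht))).differentiableAt.differentiableWithinAt
    · intro t ht
      rw [interior_Ici] at ht
      rw [(hw t (mem_Ici.mpr ht.le)).deriv]
      have := hfpos t (mem_Ici.mpr ht.le)
      nlinarith
  -- pointwise bound 1/y³ ≤ (2s+c0)^{3/2}
  have hbound : ∀ s ∈ Ici (0:ℝ), 1/(y s)^3 ≤ (2*s + c0) ^ ((3:ℝ)/2) := by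
    intro s hs
    have hys := hpos s hs
    have hws := hanti self_mem_Ici hs hs
    simp only [hy0] at hws
    have h2 : 1/(y s)^2 ≤ 2*s + c0 := by
      have e1 : (1:ℝ)/(2*(y s)^2) = (1/(y s)^2)/2 := by rw [div_div, mul_comm]
      have e2 : (1:ℝ)/(2*y₀^2) = (1/y₀^2)/2 := by rw [div_div, mul_comm]
      rw [e1, e2] at hws
      rw [hc0]
      linarith
    have h4 := Real.rpow_le_rpow (by positivity : (0:ℝ) ≤ 1/(y s)^2) h2
      (by norm_num : (0:ℝ) ≤ 3/2)
    have e3 : ((1:ℝ)/(y s)^2) ^ ((3:ℝ)/2) = 1/(y s)^3 := by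
      rw [Real.div_rpow zero_le_one (by positivity), Real.one_rpow,
        ← Real.rpow_natCast (y s) 2, ← Real.rpow_natCast (y s) 3,
        ← Real.rpow_mul hys.le]
      norm_num
    rw [e3] at h4
    exact h4
  -- integrability of g on (a, ∞) for a ≥ 0
  have hgcont : Continuous g := by
    apply Continuous.mul
    · exact Real.continuous_exp.comp (continuous_const.mul continuous_id)
    · exact (Real.continuous_rpow_const (by norm_num)).comp
        ((continuous_const.mul continuous_id).add continuous_const)
  have hgO : g =O[atTop] fun s => Real.exp (-(γ/2) * s) := by
    apply Asymptotics.IsLittleO.isBigO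
    apply Asymptotics.isLittleO_of_tendsto (fun x hx => absurd hx (Real.exp_ne_zero _))
    have T0 := tendsto_rpow_mul_exp_neg_mul_atTop_nhds_zero ((3:ℝ)/2) (γ/4) (by positivity)
    have T1 : Tendsto (fun s : ℝ => 2*s + c0) atTop atTop :=
      tendsto_atTop_add_const_right _ c0 (tendsto_id.const_mul_atTop two_pos)
    have T2 := (T0.comp T1).const_mul (Real.exp (γ/4 * c0))
    rw [mul_zero] at T2
    refine T2.congr fun s => ?_
    simp only [Function.comp, hgdef]
    rw [eq_div_iff (Real.exp_ne_zero _)]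
    rw [show Real.exp (γ/4*c0) * ((2*s+c0) ^ ((3:ℝ)/2) * Real.exp (-(γ/4)*(2*s+c0)))
        * Real.exp (-(γ/2)*s)
      = (2*s+c0) ^ ((3:ℝ)/2) *
        (Real.exp (γ/4*c0) * Real.exp (-(γ/4)*(2*s+c0)) * Real.exp (-(γ/2)*s)) by ring]
    rw [← Real.exp_add, ← Real.exp_add]
    rw [show γ/4*c0 + -(γ/4)*(2*s+c0) + -(γ/2)*s = -γ*s by ring]
    ring
  have hgint : ∀ a ∈ Ici (0:ℝ), IntegrableOn g (Ioi a) := by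
    intro a _
    exact integrable_of_isBigO_exp_neg (half_pos hγ) hgcont.continuousOn hgO
  -- integrability of f on (a, ∞) for a ≥ 0
  have hfle : ∀ s ∈ Ici (0:ℝ), f s ≤ g s := by
    intro s hs
    simp only [hfdef, hgdef]
    rw [div_eq_mul_one_div]
    exact mul_le_mul_of_nonneg_left (hbound s hs) (Real.exp_pos _).le
  have hfint : ∀ a ∈ Ici (0:ℝ), IntegrableOn f (Ioi a) := by
    intro a ha
    refine Integrable.mono' (hgint a ha) ?_ ?_
    · exact (hfcont.mono fun s hs => le_trans ha (le_of_lt hs)).aestronglyMeasurable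
        measurableSet_Ioi
    · filter_upwards [ae_restrict_mem measurableSet_Ioi] with s hs
      have hs0 : s ∈ Ici (0:ℝ) := mem_Ici.mpr (le_trans ha (le_of_lt hs))
      rw [Real.norm_eq_abs, abs_of_pos (hfpos s hs0)]
      exact hfle s hs0
  intro τ hτ
  -- FTC
  have hFTC : ∫ s in (0:ℝ)..τ, (-(ε * f s)) = (1/(2*(y τ)^2) - τ) - (1/(2*y₀^2) - 0) := by
    have := intervalIntegral.integral_eq_sub_of_hasDerivAt
      (f := fun t => 1/(2*(y t)^2) - t) (f' := fun t => -(ε * f t)) (a := 0) (b := τ)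
      (fun t ht => hw t (by
        rw [uIcc_of_le hτ] at ht
        exact ht.1)) ?_
    · rw [this]; simp [hy0]
    · apply ContinuousOn.intervalIntegrable
      have : ContinuousOn f (uIcc 0 τ) := by
        apply hfcont.mono
        rw [uIcc_of_le hτ]
        exact fun s hs => hs.1
      exact ((this.const_smul ε).neg).congr fun s _ => by simp
  have hIoc : ∫ s in (0:ℝ)..τ, f s = ∫ s in Ioc 0 τ, f s :=
    intervalIntegral.integral_of_le hτ
  have hsplit : ∫ s in Ioi (0:ℝ), f s = (∫ s in Ioc 0 τ, f s) + ∫ s in Ioi τ, f s := by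
    rw [← setIntegral_union (Ioc_disjoint_Ioi le_rfl) measurableSet_Ioi
      ((hfint 0 self_mem_Ici).mono_set Ioc_subset_Ioi_self) (hfint τ hτ),
      Ioc_union_Ioi_eq_Ioi hτ]
  constructor
  · have h1 : ∫ s in (0:ℝ)..τ, (-(ε * f s)) = -(ε * ∫ s in Ioc 0 τ, f s) := by
      rw [intervalIntegral.integral_neg, intervalIntegral.integral_const_mul, hIoc]
    rw [h1] at hFTC
    simp only [hfdef] at hsplit hFTC ⊢
    rw [hsplit]
    linarith [hFTC]
  · apply mul_le_mul_of_nonneg_left _ hε.le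
    apply setIntegral_mono_on (hfint τ hτ) (hgint τ hτ) measurableSet_Ioi
    intro s hs
    exact hfle s (mem_Ici.mpr (le_trans hτ (le_of_lt hs)))
end
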